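/- Every generalized Sahlqvist formula φ has a local first-order correspondent which is a generalized Kracht formula: there exists a generalized Kracht formula α(x_0) (read via the # translation of its atoms) such that for every Kripke frame F and every point w, F, w ⊨ φ under every valuation if and only if F ⊨ α[w]. -/

import Mathlib

set_option autoImplicit true

universe u v w

/-- Modal formulas over modality indices `Λ` and propositional variables `V`. -/
inductive MF (Λ : Type u) (V : Type v) : Type (max u v)
  | var : V → MF Λ V
  | top : MF Λ V
  | bot : MF Λ V
  | and : MF Λ V → MF Λ V → MF Λ V
  | or  : MF Λ V → MF Λ V → MF Λ V
  | neg : MF Λ V → MF Λ V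
  | imp : MF Λ V → MF Λ V → MF Λ V
  | dia : Λ → MF Λ V → MF Λ V
  | box : Λ → MF Λ V → MF Λ V

namespace MF
variable {Λ : Type u} {V : Type v}

/-- The set of propositional variables occurring in a modal formula. -/
def vars : MF Λ V → Set V
  | var p => {p}
  | top => ∅
  | bot => ∅
  | and a b => vars a ∪ vars b
  | or a b => vars a ∪ vars b
  | neg a => vars a
  | imp a b => vars a ∪ vars b
  | dia _ a => vars a
  | box _ a => vars a

end MF

/-- Positive modal formulas: built without `¬` and `→`. -/
inductive Positive {Λ : Type u} {V : Type v} : MF Λ V → Prop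
  | var (p : V) : Positive (.var p)
  | top : Positive .top
  | bot : Positive .bot
  | and {a b} : Positive a → Positive b → Positive (.and a b)
  | or {a b} : Positive a → Positive b → Positive (.or a b)
  | dia (l) {a} : Positive a → Positive (.dia l a)
  | box (l) {a} : Positive a → Positive (.box l a)

/-- A Kripke frame with accessibility relations indexed by `Λ`. -/
structure Frame (Λ : Type u) where
  W : Type w
  R : Λ → W → W → Prop

/-- Kripke satisfaction `F, x, θ ⊨ φ`. -/
def sat {Λ : Type u} {V : Type v} (F : Frame Λ) (θ : V → Set F.W) : F.W → MF Λ V → Prop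
  | x, .var p => x ∈ θ p
  | _, .top => True
  | _, .bot => False
  | x, .and a b => sat F θ x a ∧ sat F θ x b
  | x, .or a b => sat F θ x a ∨ sat F θ x b
  | x, .neg a => ¬ sat F θ x a
  | x, .imp a b => sat F θ x a → sat F θ x b
  | x, .dia l a => ∃ y, F.R l x y ∧ sat F θ y a
  | x, .box l a => ∀ y, F.R l x y → sat F θ y a

/-- `BoxF φ p S`: `φ` is a box-formula with head `p`, in which the set of variables
occurring not as the head is `S`. -/
inductive BoxF {Λ : Type u} {V : Type v} : MF Λ V → V → Set V → Prop
  | var (p : V) : BoxF (.var p) p ∅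
  | imp {POS ψ p S} : Positive POS → BoxF ψ p S → BoxF (.imp POS ψ) p (MF.vars POS ∪ S)
  | box (l) {ψ p S} : BoxF ψ p S → BoxF (.box l ψ) p S

/-- `RegBF r φ p`: relative to the rank assignment `r`, `φ` is a regular box-formula
with head `p` (of rank `r p`): all variables of the positive antecedents have rank `< r p`. -/
inductive RegBF {Λ : Type u} {V : Type v} (r : V → ℕ) : MF Λ V → V → Prop
  | var (p : V) : RegBF r (.var p) p
  | imp {POS ψ p} : Positive POS → (∀ q ∈ MF.vars POS, r q < r p) →
      RegBF r ψ p → RegBF r (.imp POS ψ) p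
  | box (l) {ψ p} : RegBF r ψ p → RegBF r (.box l ψ) p

/-- The edge relation of the dependency graph of a set `A` of box-formulas:
`p → q` iff `p` occurs (not as the head) in some member of `A` with head `q`. -/
def depEdge {Λ : Type u} {V : Type v} (A : Set (MF Λ V)) (p q : V) : Prop :=
  ∃ φ ∈ A, ∃ S, BoxF φ q S ∧ p ∈ S

/-- A set of box-formulas is regular if its dependency graph has no oriented cycle. -/
def RegularSet {Λ : Type u} {V : Type v} (A : Set (MF Λ V)) : Prop :=
  ∀ p : V, ¬ Relation.TransGen (depEdge A) p p

/-- `R_λ^{-1}(A) = {u : ∃ v, u R_λ v ∧ v ∈ A}`. -/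
def Rinv {Λ : Type u} (F : Frame Λ) (l : Λ) (A : Set F.W) : Set F.W :=
  {u | ∃ v, F.R l u v ∧ v ∈ A}

/-- `R_λ^□(A) = {u : ∀ v, u R_λ v → v ∈ A}`. -/
def RboxOp {Λ : Type u} (F : Frame Λ) (l : Λ) (A : Set F.W) : Set F.W :=
  {u | ∀ v, F.R l u v → v ∈ A}

/-- `R_λ(A) = {u : ∃ v, v R_λ u ∧ v ∈ A}`. -/
def Rfwd {Λ : Type u} (F : Frame Λ) (l : Λ) (A : Set F.W) : Set F.W :=
  {u | ∃ v, F.R l v u ∧ v ∈ A}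

/-- The interpretation of the expression `KP^{POS}` in a frame `F`, the set variables
`P^l_i` being interpreted by `P`.  (Junk value `∅` on non-positive constructors.) -/
def KPsem {Λ : Type u} (F : Frame Λ) (P : ℕ × ℕ → Set F.W) : MF Λ (ℕ × ℕ) → Set F.W
  | .var q => P q
  | .top => Set.univ
  | .bot => ∅
  | .and a b => KPsem F P a ∩ KPsem F P b
  | .or a b => KPsem F P a ∪ KPsem F P b
  | .dia l a => Rinv F l (KPsem F P a)
  | .box l a => RboxOp F l (KPsem F P a)
  | .neg _ => ∅
  | .imp _ _ => ∅

/-- The interpretation of the expression `KV^φ` in a frame `F`: the set variables `P^l_i`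
are interpreted by `P` and the extra variable `#` by the second argument.
(Junk value `∅` on constructors that do not occur in regular box-formulas.) -/
def KVsem {Λ : Type u} (F : Frame Λ) (P : ℕ × ℕ → Set F.W) : MF Λ (ℕ × ℕ) → Set F.W → Set F.W
  | .var _, X => X
  | .imp POS ψ, X => KVsem F P ψ (X ∩ KPsem F P POS)
  | .box l ψ, X => KVsem F P ψ (Rfwd F l X)
  | _, _ => ∅

/-- The semantic minimal valuation: given points `g j` and sets `f j` of regular
box-formulas to be verified at `g j`, `thetaMinSem F g f k i` is the minimal value of the
variable `p^k_i`; it is defined by recursion on the rank `k` as the union, over all `j` and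
all `φ ∈ f j` with head `p^k_i`, of `KV^φ(g j)` computed with the minimal values of the
variables of lower rank. -/
noncomputable def thetaMinSem {Λ : Type u} (F : Frame Λ) {ι : Type w} (g : ι → F.W)
    (f : ι → Set (MF Λ (ℕ × ℕ))) : ℕ → ℕ → Set F.W :=
  fun k => Nat.strongRecOn (motive := fun _ => ℕ → Set F.W) k fun k ih i =>
    ⋃ (j : ι), ⋃ φ ∈ f j, ⋃ (_ : RegBF Prod.fst φ (k, i)),
      KVsem F (fun q => if h : q.1 < k then ih q.1 h q.2 else ∅) φ {g j}

/-- `L`-expressions: terms of the language `L` with individual variables `x_i` (`i : ℕ`),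
constants `⊤, ⊥`, unary `R_λ^{-1}`, `R_λ^□`, `R_λ` and binary `∩`, `∪`. -/
inductive LExp (Λ : Type u) : Type u
  | var : ℕ → LExp Λ
  | top : LExp Λ
  | bot : LExp Λ
  | inter : LExp Λ → LExp Λ → LExp Λ
  | union : LExp Λ → LExp Λ → LExp Λ
  | rinv : Λ → LExp Λ → LExp Λ
  | rbox : Λ → LExp Λ → LExp Λ
  | rfw : Λ → LExp Λ → LExp Λ

namespace LExp
variable {Λ : Type u}

/-- Denotation of an `L`-expression in a frame `F`, the variable `x_i` denoting the
singleton of the point `g i`. -/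
def den (F : Frame Λ) (g : ℕ → F.W) : LExp Λ → Set F.W
  | var i => {g i}
  | top => Set.univ
  | bot => ∅
  | inter a b => den F g a ∩ den F g b
  | union a b => den F g a ∪ den F g b
  | rinv l a => Rinv F l (den F g a)
  | rbox l a => RboxOp F l (den F g a)
  | rfw l a => Rfwd F l (den F g a)

/-- The set of (indices of) individual variables occurring in an `L`-expression. -/
def evars : LExp Λ → Set ℕ
  | var i => {i}
  | top => ∅
  | bot => ∅
  | inter a b => evars a ∪ evars b
  | union a b => evars a ∪ evars b
  | rinv _ a => evars a
  | rbox _ a => evars a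
  | rfw _ a => evars a

end LExp

/-- The subexpression relation on `L`-expressions. -/
inductive Subexp {Λ : Type u} : LExp Λ → LExp Λ → Prop
  | refl (e : LExp Λ) : Subexp e e
  | interL {e a b} : Subexp e a → Subexp e (.inter a b)
  | interR {e a b} : Subexp e b → Subexp e (.inter a b)
  | unionL {e a b} : Subexp e a → Subexp e (.union a b)
  | unionR {e a b} : Subexp e b → Subexp e (.union a b)
  | rinv (l) {e a} : Subexp e a → Subexp e (.rinv l a)
  | rbox (l) {e a} : Subexp e a → Subexp e (.rbox l a)
  | rfw (l) {e a} : Subexp e a → Subexp e (.rfw l a)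

/-- `SafeFor e`: `e` is "safe for" the ambient expression, i.e. `e` is a variable, or
`R_λ(e')` with `e'` safe for it, or an intersection one of whose components is safe for it. -/
inductive SafeFor {Λ : Type u} : LExp Λ → Prop
  | var (i : ℕ) : SafeFor (.var i)
  | rfw (l) {a} : SafeFor a → SafeFor (.rfw l a)
  | interL {a b} : SafeFor a → SafeFor (.inter a b)
  | interR {a b} : SafeFor b → SafeFor (.inter a b)

/-- An `L`-expression is safe if it is safe for itself and the argument of every
subexpression of the form `R_λ(ψ)` is safe for it. -/
def Safe {Λ : Type u} (e : LExp Λ) : Prop :=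
  SafeFor e ∧ ∀ l a, Subexp (.rfw l a) e → SafeFor a

mutual
  /-- The class `K`: the least class of `L`-expressions containing the variables and closed
  under `S ↦ R_λ(S)` and `S ↦ S ∩ E` for `E` a positive combination of members of `K`. -/
  inductive InK {Λ : Type u} : LExp Λ → Prop
    | var (i : ℕ) : InK (.var i)
    | rfw (l : Λ) {S : LExp Λ} : InK S → InK (.rfw l S)
    | inter {S E : LExp Λ} : InK S → PosOfK E → InK (.inter S E)
  /-- Positive combinations of members of `K`: built from members of `K` using only
  `∩`, `∪`, `R_λ^{-1}`, `R_λ^□`, `⊤`, `⊥`. -/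
  inductive PosOfK {Λ : Type u} : LExp Λ → Prop
    | ofK {e : LExp Λ} : InK e → PosOfK e
    | top : PosOfK .top
    | bot : PosOfK .bot
    | inter {a b} : PosOfK a → PosOfK b → PosOfK (.inter a b)
    | union {a b} : PosOfK a → PosOfK b → PosOfK (.union a b)
    | rinv (l) {a} : PosOfK a → PosOfK (.rinv l a)
    | rbox (l) {a} : PosOfK a → PosOfK (.rbox l a)
end

/-- Quasi-safe `L`-expressions: positive combinations of safe expressions, i.e. built from
safe expressions using only `∩`, `∪`, `R_λ^{-1}`, `R_λ^□`, `⊤`, `⊥`. -/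
inductive QuasiSafe {Λ : Type u} : LExp Λ → Prop
  | safe {e : LExp Λ} : Safe e → QuasiSafe e
  | top : QuasiSafe .top
  | bot : QuasiSafe .bot
  | inter {a b} : QuasiSafe a → QuasiSafe b → QuasiSafe (.inter a b)
  | union {a b} : QuasiSafe a → QuasiSafe b → QuasiSafe (.union a b)
  | rinv (l) {a} : QuasiSafe a → QuasiSafe (.rinv l a)
  | rbox (l) {a} : QuasiSafe a → QuasiSafe (.rbox l a)

/-- `ReplOne i ψ φ φ'`: `φ'` is the result of replacing one occurrence of the variable
`x_i` in `φ` by `ψ`. -/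
inductive ReplOne {Λ : Type u} (i : ℕ) (ψ : LExp Λ) : LExp Λ → LExp Λ → Prop
  | here : ReplOne i ψ (.var i) ψ
  | interL {a a' b} : ReplOne i ψ a a' → ReplOne i ψ (.inter a b) (.inter a' b)
  | interR {a b b'} : ReplOne i ψ b b' → ReplOne i ψ (.inter a b) (.inter a b')
  | unionL {a a' b} : ReplOne i ψ a a' → ReplOne i ψ (.union a b) (.union a' b)
  | unionR {a b b'} : ReplOne i ψ b b' → ReplOne i ψ (.union a b) (.union a b')
  | rinv (l) {a a'} : ReplOne i ψ a a' → ReplOne i ψ (.rinv l a) (.rinv l a')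
  | rbox (l) {a a'} : ReplOne i ψ a a' → ReplOne i ψ (.rbox l a) (.rbox l a')
  | rfw (l) {a a'} : ReplOne i ψ a a' → ReplOne i ψ (.rfw l a) (.rfw l a')

/-- A finite union of `L`-expressions (empty union is `⊥`). -/
def unionList {Λ : Type u} : List (LExp Λ) → LExp Λ
  | [] => .bot
  | e :: es => .union e (unionList es)

/-- `UnionOfSafe e`: `e` is a finite union of safe expressions. -/
inductive UnionOfSafe {Λ : Type u} : LExp Λ → Prop
  | bot : UnionOfSafe .bot
  | safe {e : LExp Λ} : Safe e → UnionOfSafe e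
  | union {a b} : UnionOfSafe a → UnionOfSafe b → UnionOfSafe (.union a b)

/-- Syntactic `KP^{POS}`: the `L`-expression obtained from the positive formula `POS` by
replacing each set variable `P^l_i` by the `L`-expression `KF (l, i)`.
(Junk value on non-positive constructors.) -/
def KPsub {Λ : Type u} (KF : ℕ × ℕ → LExp Λ) : MF Λ (ℕ × ℕ) → LExp Λ
  | .var q => KF q
  | .top => .top
  | .bot => .bot
  | .and a b => .inter (KPsub KF a) (KPsub KF b)
  | .or a b => .union (KPsub KF a) (KPsub KF b)
  | .dia l a => .rinv l (KPsub KF a)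
  | .box l a => .rbox l (KPsub KF a)
  | .neg _ => .bot
  | .imp _ _ => .bot

/-- Syntactic `KVF^φ(t)`: the `L`-expression obtained from `KV^φ` by substituting the
`L`-expression `t` for `#` and `KF (l, i)` for each set variable `P^l_i`.
(Junk value on constructors that do not occur in regular box-formulas.) -/
def KVFsyn {Λ : Type u} (KF : ℕ × ℕ → LExp Λ) : MF Λ (ℕ × ℕ) → LExp Λ → LExp Λ
  | .var _, t => t
  | .imp POS ψ, t => KVFsyn KF ψ (.inter t (KPsub KF POS))
  | .box l ψ, t => KVFsyn KF ψ (.rfw l t)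
  | _, _ => .bot

open scoped Classical in
/-- The syntactic minimal valuation `KF_f^{p^k_i}` for variables `x_0, …, x_{n-1}` and
`f` assigning to each variable a finite set of regular box-formulas: defined by recursion on
the rank `k` as the union, over all `j < n` and all `φ ∈ f j` with head `p^k_i`, of
`KVF_f^φ(x_j)`, which is `KV^φ` with `x_j` substituted for `#` and `KF_f^{p^l_m}`
substituted for each `P^l_m` with `l < k`. -/
noncomputable def KFsyn {Λ : Type u} (n : ℕ) (f : ℕ → Finset (MF Λ (ℕ × ℕ))) :
    ℕ → ℕ → LExp Λ :=
  fun k => Nat.strongRecOn (motive := fun _ => ℕ → LExp Λ) k fun k ih i =>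
    unionList (((List.range n).flatMap fun j =>
      ((f j).toList.filter fun φ => decide (RegBF Prod.fst φ (k, i))).map fun φ =>
        KVFsyn (fun q => if h : q.1 < k then ih q.1 h q.2 else LExp.bot) φ (LExp.var j)))

/-- The expressions substituted for the set variables `P^l_m`, `l < k`, in `KVF`:
the syntactic minimal valuations of the lower ranks. -/
noncomputable def lowKF {Λ : Type u} (n : ℕ) (f : ℕ → Finset (MF Λ (ℕ × ℕ))) (k : ℕ) :
    ℕ × ℕ → LExp Λ :=
  fun q => if q.1 < k then KFsyn n f q.1 q.2 else LExp.bot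

/-- `KVFat n f φ j k` is the `L`-expression `KVF_f^φ(x_j)` for `φ` a regular box-formula
of rank `k`. -/
noncomputable def KVFat {Λ : Type u} (n : ℕ) (f : ℕ → Finset (MF Λ (ℕ × ℕ)))
    (φ : MF Λ (ℕ × ℕ)) (j k : ℕ) : LExp Λ :=
  KVFsyn (lowKF n f k) φ (.var j)

/-- A labelled tree-like structure: a set of vertices with relations indexed by `Λ`,
a root, and a label function assigning to every vertex a set of labels from `α`. -/
structure LabTree (Λ : Type u) (α : Type v) where
  V : Type
  R : Λ → V → V → Prop
  root : V
  label : V → Set α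

/-- Derivation trees witnessing that a formula is built from base formulas using only
`∧` and `◇_λ`. -/
inductive BuiltT (Λ : Type u) (V : Type v) : Type (max u v)
  | base : MF Λ V → BuiltT Λ V
  | and : BuiltT Λ V → BuiltT Λ V → BuiltT Λ V
  | dia : Λ → BuiltT Λ V → BuiltT Λ V

/-- The modal formula described by a derivation tree. -/
def BuiltT.formula {Λ : Type u} {V : Type v} : BuiltT Λ V → MF Λ V
  | base φ => φ
  | and a b => .and a.formula b.formula
  | dia l a => .dia l a.formula

/-- The derivation tree uses only base formulas from `A`. -/
def BuiltT.Ok {Λ : Type u} {V : Type v} (A : Set (MF Λ V)) : BuiltT Λ V → Prop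
  | base φ => φ ∈ A
  | and a b => a.Ok A ∧ b.Ok A
  | dia _ a => a.Ok A

/-- Helper for gluing two labelled trees at their roots: the relation on the disjoint sum,
with the edges out of the second root re-attached to the first root. -/
def glueR {Λ : Type u} {W₁ W₂ : Type} (R₁ : Λ → W₁ → W₁ → Prop) (R₂ : Λ → W₂ → W₂ → Prop)
    (r₁ : W₁) (r₂ : W₂) (l : Λ) : W₁ ⊕ W₂ → W₁ ⊕ W₂ → Prop
  | Sum.inl a, Sum.inl b => R₁ l a b
  | Sum.inr a, Sum.inr b => R₂ l a b
  | Sum.inl a, Sum.inr b => a = r₁ ∧ R₂ l r₂ b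
  | Sum.inr _, Sum.inl _ => False

open Classical in
/-- Helper for gluing two labelled trees at their roots: the label function, the glued root
receiving the union of the two root labels. -/
noncomputable def glueLab {α : Type w} {W₁ W₂ : Type} (L₁ : W₁ → Set α) (L₂ : W₂ → Set α)
    (r₁ : W₁) (r₂ : W₂) : W₁ ⊕ W₂ → Set α
  | Sum.inl a => if a = r₁ then L₁ r₁ ∪ L₂ r₂ else L₁ a
  | Sum.inr b => L₂ b

/-- Helper for prefixing a labelled tree with a new root: the relation on `Option W`,
with an `R_{l₀}`-edge from the new root `none` to the old root `r`. -/
def prefR {Λ : Type u} {W : Type} (R : Λ → W → W → Prop) (l₀ : Λ) (r : W) (l : Λ) :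
    Option W → Option W → Prop
  | none, some w => l = l₀ ∧ w = r
  | some a, some b => R l a b
  | _, _ => False

/-- Helper for prefixing a labelled tree with a new root: the label function, the new root
getting the empty label. -/
def prefLab {α : Type w} {W : Type} (L : W → Set α) : Option W → Set α
  | none => ∅
  | some a => L a

/-- The reduced syntactical tree of a formula built from base formulas using `∧` and `◇_λ`:
a single root labelled `{a}` for a base formula `a`; for a conjunction, the two trees
with their roots identified (labels united); for `◇_λ ψ`, a new root with empty label and an
`R_λ`-edge to the root of the tree of `ψ`. -/
noncomputable def TreeOf {Λ : Type u} {V : Type v} : BuiltT Λ V → LabTree Λ (MF Λ V)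
  | .base φ =>
      { V := Unit, R := fun _ _ _ => False, root := (), label := fun _ => {φ} }
  | .and b₁ b₂ =>
      let T₁ := TreeOf b₁
      let T₂ := TreeOf b₂
      { V := {v : T₁.V ⊕ T₂.V // v ≠ Sum.inr T₂.root},
        R := fun l u v => glueR T₁.R T₂.R T₁.root T₂.root l u.1 v.1,
        root := ⟨Sum.inl T₁.root, by exact Sum.inl_ne_inr⟩,
        label := fun v => glueLab T₁.label T₂.label T₁.root T₂.root v.1 }
  | .dia l b =>
      let T := TreeOf b
      { V := Option T.V,
        R := fun l' u v => prefR T.R l T.root l' u v,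
        root := none,
        label := fun v => prefLab T.label v }

/-- Restrictedly positive first-order formulas over the frame language: built from atoms
`y ∈ E` (`E` an `L`-expression) using `∧`, `∨` and the restricted quantifiers
`(∀ y ◁_λ x)` and `(∃ y ◁_λ x)`. -/
inductive KrF (Λ : Type u) : Type u
  | atom : ℕ → LExp Λ → KrF Λ
  | and : KrF Λ → KrF Λ → KrF Λ
  | or : KrF Λ → KrF Λ → KrF Λ
  | all : ℕ → Λ → ℕ → KrF Λ → KrF Λ
  | ex : ℕ → Λ → ℕ → KrF Λ → KrF Λ

namespace KrF
variable {Λ : Type u}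

/-- Truth of a restrictedly positive formula in a frame under an assignment `g` of points to
individual variables; the atom `y ∈ E` is read via the `#`-translation, i.e. as membership
of `g y` in the denotation of `E`. -/
def holds (F : Frame Λ) : (ℕ → F.W) → KrF Λ → Prop
  | g, atom y E => g y ∈ E.den F g
  | g, and a b => holds F g a ∧ holds F g b
  | g, or a b => holds F g a ∨ holds F g b
  | g, all y l x β => ∀ w, F.R l (g x) w → holds F (Function.update g y w) β
  | g, ex y l x β => ∃ w, F.R l (g x) w ∧ holds F (Function.update g y w) β

/-- Free variables. -/
def fv : KrF Λ → Set ℕ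
  | atom y E => insert y E.evars
  | and a b => fv a ∪ fv b
  | or a b => fv a ∪ fv b
  | all y _ x β => insert x (fv β \ {y})
  | ex y _ x β => insert x (fv β \ {y})

/-- Bound variables. -/
def bv : KrF Λ → Set ℕ
  | atom _ _ => ∅
  | and a b => bv a ∪ bv b
  | or a b => bv a ∪ bv b
  | all y _ _ β => insert y (bv β)
  | ex y _ _ β => insert y (bv β)

/-- No two distinct quantifier occurrences bind the same variable. -/
def CleanBound : KrF Λ → Prop
  | atom _ _ => True
  | and a b => CleanBound a ∧ CleanBound b ∧ bv a ∩ bv b = ∅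
  | or a b => CleanBound a ∧ CleanBound b ∧ bv a ∩ bv b = ∅
  | all y _ _ β => CleanBound β ∧ y ∉ bv β
  | ex y _ _ β => CleanBound β ∧ y ∉ bv β

/-- Clean formulas: no variable occurs both free and bound, and no two distinct quantifier
occurrences bind the same variable. -/
def Clean (φ : KrF Λ) : Prop := fv φ ∩ bv φ = ∅ ∧ CleanBound φ

/-- All the `L`-expressions occurring in atoms of the formula satisfy `P`. -/
def AtomsAll (P : LExp Λ → Prop) : KrF Λ → Prop
  | atom _ E => P E
  | and a b => AtomsAll P a ∧ AtomsAll P b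
  | or a b => AtomsAll P a ∧ AtomsAll P b
  | all _ _ _ β => AtomsAll P β
  | ex _ _ _ β => AtomsAll P β

/-- Quantifier-free formulas (built from atoms using only `∧` and `∨`). -/
def QFree : KrF Λ → Prop
  | atom _ _ => True
  | and a b => QFree a ∧ QFree b
  | or a b => QFree a ∧ QFree b
  | all _ _ _ _ => False
  | ex _ _ _ _ => False

/-- Formulas built from atoms using only `∧`, `∨` and restricted universal quantification
(no existential quantifier). -/
def NoEx : KrF Λ → Prop
  | atom _ _ => True
  | and a b => NoEx a ∧ NoEx b
  | or a b => NoEx a ∧ NoEx b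
  | all _ _ _ β => NoEx β
  | ex _ _ _ _ => False

/-- `GKok U e φ`: every variable occurring in an `L`-expression of an atom of `φ` is
inherently universal. Here `U` is the set of variables that are inherently universal so far
(initially the free variables) and `e` records whether we are within the scope of an
existential quantifier. -/
def GKok : Set ℕ → Bool → KrF Λ → Prop
  | U, _, atom _ E => E.evars ⊆ U
  | U, e, and a b => GKok U e a ∧ GKok U e b
  | U, e, or a b => GKok U e a ∧ GKok U e b
  | U, false, all y _ _ β => GKok (insert y U) false β
  | U, true, all _ _ _ β => GKok U true β
  | U, _, ex _ _ _ β => GKok U true β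

end KrF

/-- A generalized Kracht formula with free variables: clean, restrictedly positive with safe
atoms, and in every atom `y ∈ E` all variables of `E` are inherently universal. -/
def IsGenKrachtFV {Λ : Type u} (α : KrF Λ) : Prop :=
  α.Clean ∧ α.AtomsAll Safe ∧ α.GKok α.fv false

/-- A generalized Kracht formula: a generalized Kracht formula with free variables whose
only free variable is `x0`. -/
def IsGenKracht {Λ : Type u} (α : KrF Λ) (x0 : ℕ) : Prop :=
  IsGenKrachtFV α ∧ α.fv = {x0}

/-- Generalized Sahlqvist antecedents: built from regular box-formulas and negative
formulas using only `∧`, `∨`, `◇_λ`. -/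
inductive GSAnt {Λ : Type u} : MF Λ (ℕ × ℕ) → Prop
  | reg {φ p} : RegBF Prod.fst φ p → GSAnt φ
  | neg {φ} : Positive φ → GSAnt (.neg φ)
  | and {a b} : GSAnt a → GSAnt b → GSAnt (.and a b)
  | or {a b} : GSAnt a → GSAnt b → GSAnt (.or a b)
  | dia (l) {a} : GSAnt a → GSAnt (.dia l a)

/-- Generalized Sahlqvist formulas: built from generalized Sahlqvist implications
`GSA → ⊥` by applying boxes and conjunctions, and disjunctions only to formulas without
common propositional variables. -/
inductive GSF {Λ : Type u} : MF Λ (ℕ × ℕ) → Prop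
  | impl {a} : GSAnt a → GSF (.imp a .bot)
  | box (l) {a} : GSF a → GSF (.box l a)
  | and {a b} : GSF a → GSF b → GSF (.and a b)
  | or {a b} : GSF a → GSF b → MF.vars a ∩ MF.vars b = ∅ → GSF (.or a b)

open Classical in
/-- The modal translation `E^T` of a quasi-safe expression: safe subexpressions are
replaced by their associated propositional variables `p_E`, and `∩, ∪, R^{-1}_λ, R^□_λ`
become `∧, ∨, ◇_λ, □_λ`. -/
noncomputable def Etrans {Λ : Type u} (pE : LExp Λ → ℕ × ℕ) : LExp Λ → MF Λ (ℕ × ℕ)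
  | .var i => .var (pE (.var i))
  | .top => .top
  | .bot => .bot
  | .inter a b =>
      if Safe (LExp.inter a b) then .var (pE (.inter a b))
      else .and (Etrans pE a) (Etrans pE b)
  | .union a b =>
      if Safe (LExp.union a b) then .var (pE (.union a b))
      else .or (Etrans pE a) (Etrans pE b)
  | .rinv l a =>
      if Safe (LExp.rinv l a) then .var (pE (.rinv l a)) else .dia l (Etrans pE a)
  | .rbox l a =>
      if Safe (LExp.rbox l a) then .var (pE (.rbox l a)) else .box l (Etrans pE a)
  | .rfw l a => if Safe (LExp.rfw l a) then .var (pE (.rfw l a)) else .bot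

/-- A finite disjunction of modal formulas (empty disjunction is `⊥`). -/
def orList {Λ : Type u} {V : Type v} : List (MF Λ V) → MF Λ V
  | [] => .bot
  | a :: as => .or a (orList as)


/-! ### Basic semantic lemmas -/

section Basics
variable {Λ : Type u} {V : Type v}

theorem sat_congr_vars {F : Frame Λ} {θ θ' : V → Set F.W} (φ : MF Λ V)
    (h : ∀ q ∈ MF.vars φ, θ q = θ' q) (x : F.W) : sat F θ x φ ↔ sat F θ' x φ := by
  induction φ generalizing x with
  | var p => simp [sat, h p (by simp [MF.vars])]
  | top => simp [sat]
  | bot => simp [sat]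
  | and a b iha ihb =>
      simp only [sat]
      rw [iha (fun q hq => h q (Or.inl hq)) x, ihb (fun q hq => h q (Or.inr hq)) x]
  | or a b iha ihb =>
      simp only [sat]
      rw [iha (fun q hq => h q (Or.inl hq)) x, ihb (fun q hq => h q (Or.inr hq)) x]
  | neg a iha => simp only [sat]; rw [iha h x]
  | imp a b iha ihb =>
      simp only [sat]
      rw [iha (fun q hq => h q (Or.inl hq)) x, ihb (fun q hq => h q (Or.inr hq)) x]
  | dia l a iha =>
      simp only [sat]
      exact exists_congr fun y => and_congr_right fun _ => iha h y
  | box l a iha =>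
      simp only [sat]
      exact forall_congr' fun y => imp_congr_right fun _ => iha h y

theorem KPsem_mono {F : Frame Λ} {P P' : ℕ × ℕ → Set F.W} (h : ∀ q, P q ⊆ P' q)
    (φ : MF Λ (ℕ × ℕ)) : KPsem F P φ ⊆ KPsem F P' φ := by
  induction φ with
  | var q => exact h q
  | top => exact subset_rfl
  | bot => exact subset_rfl
  | and a b iha ihb => exact Set.inter_subset_inter iha ihb
  | or a b iha ihb => exact Set.union_subset_union iha ihb
  | neg a iha => exact subset_rfl
  | imp a b iha ihb => exact subset_rfl
  | dia l a iha => exact fun x ⟨v, hv, hm⟩ => ⟨v, hv, iha hm⟩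
  | box l a iha => exact fun x hx v hv => iha (hx v hv)

theorem KPsem_congr {F : Frame Λ} {P P' : ℕ × ℕ → Set F.W} (φ : MF Λ (ℕ × ℕ))
    (h : ∀ q ∈ MF.vars φ, P q = P' q) : KPsem F P φ = KPsem F P' φ := by
  induction φ with
  | var q => exact h q (by simp [MF.vars])
  | top => rfl
  | bot => rfl
  | and a b iha ihb =>
      rw [KPsem, KPsem, iha (fun q hq => h q (Or.inl hq)), ihb (fun q hq => h q (Or.inr hq))]
  | or a b iha ihb =>
      rw [KPsem, KPsem, iha (fun q hq => h q (Or.inl hq)), ihb (fun q hq => h q (Or.inr hq))]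
  | neg a iha => rfl
  | imp a b iha ihb => rfl
  | dia l a iha => rw [KPsem, KPsem, iha h]
  | box l a iha => rw [KPsem, KPsem, iha h]

theorem posSat {F : Frame Λ} {θ : ℕ × ℕ → Set F.W} {φ : MF Λ (ℕ × ℕ)} (hφ : Positive φ) :
    ∀ x : F.W, sat F θ x φ ↔ x ∈ KPsem F θ φ := by
  induction hφ with
  | var p => intro x; rfl
  | top => intro x; simp [sat, KPsem]
  | bot => intro x; simp [sat, KPsem]
  | and ha hb iha ihb => intro x; simp only [sat, KPsem, Set.mem_inter_iff, iha, ihb]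
  | or ha hb iha ihb => intro x; simp only [sat, KPsem, Set.mem_union, iha, ihb]
  | dia l ha iha =>
      intro x
      simp only [sat, KPsem]
      exact exists_congr fun y => and_congr_right fun _ => iha y
  | box l ha iha =>
      intro x
      simp only [sat, KPsem]
      exact forall_congr' fun y => imp_congr_right fun _ => iha y

theorem pos_mono {F : Frame Λ} {θ θ' : ℕ × ℕ → Set F.W} {φ : MF Λ (ℕ × ℕ)}
    (hφ : Positive φ) (h : ∀ q, θ q ⊆ θ' q) {x : F.W} (hx : sat F θ x φ) :
    sat F θ' x φ := by
  rw [posSat hφ] at hx ⊢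
  exact KPsem_mono h φ hx

theorem KVsem_empty {F : Frame Λ} (P : ℕ × ℕ → Set F.W) (φ : MF Λ (ℕ × ℕ)) :
    KVsem F P φ ∅ = ∅ := by
  induction φ generalizing P with
  | imp a b iha ihb => rw [KVsem, Set.empty_inter, ihb]
  | box l a iha =>
      rw [KVsem]
      have : Rfwd F l (∅ : Set F.W) = ∅ := by
        ext x; simp [Rfwd]
      rw [this, iha]
  | var q => rfl
  | top => rfl
  | bot => rfl
  | and a b iha ihb => rfl
  | or a b iha ihb => rfl
  | neg a iha => rfl
  | dia l a iha => rfl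

theorem KVsem_mono {F : Frame Λ} {P P' : ℕ × ℕ → Set F.W} (h : ∀ q, P q ⊆ P' q)
    (φ : MF Λ (ℕ × ℕ)) : ∀ {X X' : Set F.W}, X ⊆ X' → KVsem F P φ X ⊆ KVsem F P' φ X' := by
  induction φ with
  | var q => intro X X' hX; exact hX
  | imp a b iha ihb =>
      intro X X' hX
      exact ihb (Set.inter_subset_inter hX (KPsem_mono h a))
  | box l a iha =>
      intro X X' hX
      exact iha fun x ⟨v, hv, hm⟩ => ⟨v, hv, hX hm⟩
  | top => intro _ _ _; exact subset_rfl
  | bot => intro _ _ _; exact subset_rfl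
  | and a b iha ihb => intro _ _ _; exact subset_rfl
  | or a b iha ihb => intro _ _ _; exact subset_rfl
  | neg a iha => intro _ _ _; exact subset_rfl
  | dia l a iha => intro _ _ _; exact subset_rfl

/-- `KVsem` only depends on the values of `P` at variables of rank below the head. -/
theorem KVsem_lower {F : Frame Λ} {r : ℕ × ℕ → ℕ} {φ : MF Λ (ℕ × ℕ)} {p : ℕ × ℕ}
    (hφ : RegBF r φ p) {P P' : ℕ × ℕ → Set F.W}
    (h : ∀ q, r q < r p → P q = P' q) : ∀ X : Set F.W, KVsem F P φ X = KVsem F P' φ X := by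
  induction hφ with
  | var q => intro X; rfl
  | @imp POS ψ p hPOS hlt hψ ih =>
      intro X
      rw [KVsem, KVsem, KPsem_congr POS (fun q hq => h q (hlt q hq)), ih h]
  | box l hψ ih => intro X; rw [KVsem, KVsem, ih h]

/-- The fundamental property of `KVsem` for regular box-formulas. -/
theorem boxSat {F : Frame Λ} {r : ℕ × ℕ → ℕ} {φ : MF Λ (ℕ × ℕ)} {p : ℕ × ℕ}
    (hφ : RegBF r φ p) (θ : ℕ × ℕ → Set F.W) :
    ∀ X : Set F.W, (∀ y ∈ X, sat F θ y φ) ↔ KVsem F θ φ X ⊆ θ p := by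
  induction hφ with
  | var q => intro X; simp only [KVsem]; rfl
  | @imp POS ψ p hPOS hlt hψ ih =>
      intro X
      rw [KVsem, ← ih]
      constructor
      · rintro h y ⟨hyX, hyP⟩
        exact h y hyX ((posSat hPOS y).mpr hyP)
      · intro h y hyX hyP
        exact h y ⟨hyX, (posSat hPOS y).mp hyP⟩
  | @box l ψ p hψ ih =>
      intro X
      rw [KVsem, ← ih]
      constructor
      · rintro h y ⟨v, hv, hvX⟩
        exact h v hvX y hv
      · intro h v hvX y hv
        exact h y ⟨v, hv, hvX⟩

end Basics

/-! ### The semantic minimal valuation -/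

section MinVal
variable {Λ : Type u}

/-- Our minimal valuation: `n` points `g 0, …, g (n-1)`, with lists `bx j` of regular
box-formulas to verify at `g j`. -/
noncomputable def myMin (F : Frame Λ) (n : ℕ) (g : ℕ → F.W)
    (bx : ℕ → List (MF Λ (ℕ × ℕ))) : ℕ → ℕ → Set F.W
  | k, i =>
      ⋃ j ∈ Finset.range n, ⋃ φ ∈ bx j, ⋃ _ : RegBF Prod.fst φ (k, i),
        KVsem F (fun q => if h : q.1 < k then myMin F n g bx q.1 q.2 else ∅) φ {g j}
  termination_by k => k
  decreasing_by exact h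

/-- `myMin` as a valuation. -/
noncomputable def myMinV (F : Frame Λ) (n : ℕ) (g : ℕ → F.W)
    (bx : ℕ → List (MF Λ (ℕ × ℕ))) : ℕ × ℕ → Set F.W :=
  fun q => myMin F n g bx q.1 q.2

theorem myMin_eq (F : Frame Λ) (n : ℕ) (g : ℕ → F.W) (bx : ℕ → List (MF Λ (ℕ × ℕ)))
    (k i : ℕ) :
    myMin F n g bx k i =
      ⋃ j ∈ Finset.range n, ⋃ φ ∈ bx j, ⋃ _ : RegBF Prod.fst φ (k, i),
        KVsem F (fun q => if q.1 < k then myMin F n g bx q.1 q.2 else ∅) φ {g j} := by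
  rw [myMin]; simp only [dite_eq_ite]

/-- The minimal valuation satisfies all the box-formula constraints. -/
theorem myMin_sat {F : Frame Λ} {n : ℕ} {g : ℕ → F.W} {bx : ℕ → List (MF Λ (ℕ × ℕ))}
    {j : ℕ} (hj : j < n) {φ : MF Λ (ℕ × ℕ)} (hφ : φ ∈ bx j) {p : ℕ × ℕ}
    (hreg : RegBF Prod.fst φ p) : sat F (myMinV F n g bx) (g j) φ := by
  refine ((boxSat hreg (myMinV F n g bx) {g j}).mpr ?_) (g j) rfl
  have h2 : KVsem F (myMinV F n g bx) φ {g j} =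
      KVsem F (fun q => if q.1 < p.1 then myMin F n g bx q.1 q.2 else ∅) φ {g j} :=
    KVsem_lower hreg (fun q hq => by simp [myMinV, if_pos hq]) {g j}
  rw [h2]
  intro x hx
  show x ∈ myMin F n g bx p.1 p.2
  rw [myMin_eq]
  refine Set.mem_biUnion (Finset.mem_range.mpr hj) ?_
  refine Set.mem_biUnion hφ ?_
  have hreg' : RegBF Prod.fst φ (p.1, p.2) := by rwa [Prod.mk.eta]
  exact Set.mem_iUnion.mpr ⟨hreg', hx⟩

/-- The minimal valuation is pointwise below every valuation satisfying the constraints. -/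
theorem myMin_min {F : Frame Λ} {n : ℕ} {g : ℕ → F.W} {bx : ℕ → List (MF Λ (ℕ × ℕ))}
    {θ : ℕ × ℕ → Set F.W}
    (hθ : ∀ j < n, ∀ φ ∈ bx j, sat F θ (g j) φ)
    (hreg : ∀ j < n, ∀ φ ∈ bx j, ∃ p, RegBF Prod.fst φ p) :
    ∀ q : ℕ × ℕ, myMinV F n g bx q ⊆ θ q := by
  suffices H : ∀ k i, myMin F n g bx k i ⊆ θ (k, i) by
    intro q
    have := H q.1 q.2
    rwa [Prod.mk.eta] at this
  intro k
  induction k using Nat.strong_induction_on with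
  | _ k ih =>
  intro i x hx
  rw [myMin_eq] at hx
  simp only [Set.mem_iUnion, Finset.mem_range] at hx
  obtain ⟨j, hj, φ, hφ, hrφ, hxv⟩ := hx
  have hsub : KVsem F (fun r => if r.1 < k then myMin F n g bx r.1 r.2 else ∅) φ {g j}
      ⊆ KVsem F θ φ {g j} := by
    refine KVsem_mono (fun r => ?_) φ subset_rfl
    by_cases h : r.1 < k
    · rw [if_pos h]
      intro z hz
      have := ih r.1 h r.2 hz
      rwa [Prod.mk.eta] at this
    · rw [if_neg h]; exact Set.empty_subset _
  exact (boxSat hrφ θ {g j}).mp (fun y hy => hy ▸ hθ j hj φ hφ) (hsub hxv)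
end MinVal

/-! ### Syntactic minimal valuation and safety -/

section Syn
variable {Λ : Type u}

theorem den_unionList (F : Frame Λ) (g : ℕ → F.W) (L : List (LExp Λ)) :
    LExp.den F g (unionList L) = ⋃ S ∈ L, LExp.den F g S := by
  induction L with
  | nil => simp [unionList, LExp.den]
  | cons a as ih => simp [unionList, LExp.den, ih]

theorem den_KPsub (F : Frame Λ) (g : ℕ → F.W) (KF : ℕ × ℕ → LExp Λ) (ψ : MF Λ (ℕ × ℕ)) :
    LExp.den F g (KPsub KF ψ) = KPsem F (fun q => LExp.den F g (KF q)) ψ := by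
  induction ψ with
  | var q => rfl
  | top => rfl
  | bot => rfl
  | and a b iha ihb => rw [KPsub, KPsem, LExp.den, iha, ihb]
  | or a b iha ihb => rw [KPsub, KPsem, LExp.den, iha, ihb]
  | neg a iha => rfl
  | imp a b iha ihb => rfl
  | dia l a iha => rw [KPsub, KPsem, LExp.den, iha]
  | box l a iha => rw [KPsub, KPsem, LExp.den, iha]

theorem den_KVFsyn (F : Frame Λ) (g : ℕ → F.W) (KF : ℕ × ℕ → LExp Λ) (ψ : MF Λ (ℕ × ℕ)) :
    ∀ t : LExp Λ, LExp.den F g (KVFsyn KF ψ t) =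
      KVsem F (fun q => LExp.den F g (KF q)) ψ (LExp.den F g t) := by
  induction ψ with
  | var q => intro t; rfl
  | imp a b iha ihb =>
      intro t
      rw [KVFsyn, KVsem, ihb, LExp.den, den_KPsub]
  | box l a iha =>
      intro t
      rw [KVFsyn, KVsem, iha, LExp.den]
  | top => intro t; rfl
  | bot => intro t; rfl
  | and a b iha ihb => intro t; rfl
  | or a b iha ihb => intro t; rfl
  | neg a iha => intro t; rfl
  | dia l a iha => intro t; rfl

open Classical in
/-- The list of components of the syntactic minimal valuation for the variable `p^k_i`,
relative to the node-variable assignment `v`, node count `n` and constraint lists `bx`. -/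
noncomputable def compList (v : ℕ → ℕ) (n : ℕ) (bx : ℕ → List (MF Λ (ℕ × ℕ))) :
    ℕ → ℕ → List (LExp Λ)
  | k, i =>
      (List.range n).flatMap fun j =>
        ((bx j).filter fun φ => decide (RegBF Prod.fst φ (k, i))).map fun φ =>
          KVFsyn (fun q => if h : q.1 < k then unionList (compList v n bx q.1 q.2)
            else LExp.bot) φ (.var (v j))
  termination_by k => k
  decreasing_by exact h

open Classical in
theorem compList_eq (v : ℕ → ℕ) (n : ℕ) (bx : ℕ → List (MF Λ (ℕ × ℕ))) (k i : ℕ) :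
    compList v n bx k i =
      (List.range n).flatMap fun j =>
        ((bx j).filter fun φ => decide (RegBF Prod.fst φ (k, i))).map fun φ =>
          KVFsyn (fun q => if q.1 < k then unionList (compList v n bx q.1 q.2)
            else LExp.bot) φ (.var (v j)) := by
  rw [compList]; simp only [dite_eq_ite]

/-- The syntactic minimal valuation denotes the semantic minimal valuation. -/
theorem den_compList (F : Frame Λ) (g : ℕ → F.W) (v : ℕ → ℕ) (n : ℕ)
    (bx : ℕ → List (MF Λ (ℕ × ℕ))) (h : ℕ → F.W) (hgv : ∀ j < n, g (v j) = h j) :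
    ∀ k i, (⋃ S ∈ compList v n bx k i, LExp.den F g S) = myMin F n h bx k i := by
  intro k
  induction k using Nat.strong_induction_on with
  | _ k ih =>
  intro i
  rw [compList_eq, myMin_eq]
  ext x
  simp only [Set.mem_iUnion, List.mem_flatMap, List.mem_map, List.mem_filter,
    List.mem_range, Finset.mem_range, decide_eq_true_eq]
  constructor
  · rintro ⟨S, ⟨j, hj, φ, ⟨hφ, hrφ⟩, rfl⟩, hx⟩
    refine ⟨j, hj, φ, hφ, hrφ, ?_⟩
    rw [den_KVFsyn] at hx
    have : (fun q : ℕ × ℕ => LExp.den F g (if q.1 < k then unionList (compList v n bx q.1 q.2)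
        else LExp.bot)) = fun q => if q.1 < k then myMin F n h bx q.1 q.2 else ∅ := by
      funext q
      by_cases hq : q.1 < k
      · rw [if_pos hq, if_pos hq, den_unionList, ih q.1 hq q.2]
      · rw [if_neg hq, if_neg hq]; rfl
    rw [this] at hx
    have hden : LExp.den F g (LExp.var (v j)) = {h j} := by
      rw [LExp.den, hgv j hj]
    rwa [hden] at hx
  · rintro ⟨j, hj, φ, hφ, hrφ, hx⟩
    refine ⟨KVFsyn (fun q => if q.1 < k then unionList (compList v n bx q.1 q.2)
        else LExp.bot) φ (.var (v j)), ⟨j, hj, φ, ⟨hφ, hrφ⟩, rfl⟩, ?_⟩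
    rw [den_KVFsyn]
    have : (fun q : ℕ × ℕ => LExp.den F g (if q.1 < k then unionList (compList v n bx q.1 q.2)
        else LExp.bot)) = fun q => if q.1 < k then myMin F n h bx q.1 q.2 else ∅ := by
      funext q
      by_cases hq : q.1 < k
      · rw [if_pos hq, if_pos hq, den_unionList, ih q.1 hq q.2]
      · rw [if_neg hq, if_neg hq]; rfl
    rw [this]
    have hden : LExp.den F g (LExp.var (v j)) = {h j} := by
      rw [LExp.den, hgv j hj]
    rwa [hden]

theorem den_congr (F : Frame Λ) {g g' : ℕ → F.W} (E : LExp Λ)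
    (h : ∀ i ∈ LExp.evars E, g i = g' i) : LExp.den F g E = LExp.den F g' E := by
  induction E with
  | var i => rw [LExp.den, LExp.den, h i (by simp [LExp.evars])]
  | top => rfl
  | bot => rfl
  | inter a b iha ihb =>
      rw [LExp.den, LExp.den, iha fun i hi => h i (Or.inl hi), ihb fun i hi => h i (Or.inr hi)]
  | union a b iha ihb =>
      rw [LExp.den, LExp.den, iha fun i hi => h i (Or.inl hi), ihb fun i hi => h i (Or.inr hi)]
  | rinv l a iha => rw [LExp.den, LExp.den, iha h]
  | rbox l a iha => rw [LExp.den, LExp.den, iha h]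
  | rfw l a iha => rw [LExp.den, LExp.den, iha h]

theorem evars_unionList (L : List (LExp Λ)) :
    LExp.evars (unionList L) = ⋃ S ∈ L, LExp.evars S := by
  induction L with
  | nil => simp [unionList, LExp.evars]
  | cons a as ih => simp [unionList, LExp.evars, ih]

theorem evars_KPsub (KF : ℕ × ℕ → LExp Λ) (ψ : MF Λ (ℕ × ℕ)) :
    LExp.evars (KPsub KF ψ) ⊆ ⋃ q, LExp.evars (KF q) := by
  induction ψ with
  | var q => exact Set.subset_iUnion (fun q => LExp.evars (KF q)) q
  | top => exact Set.empty_subset _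
  | bot => exact Set.empty_subset _
  | and a b iha ihb => exact Set.union_subset iha ihb
  | or a b iha ihb => exact Set.union_subset iha ihb
  | neg a iha => exact Set.empty_subset _
  | imp a b iha ihb => exact Set.empty_subset _
  | dia l a iha => exact iha
  | box l a iha => exact iha

theorem evars_KVFsyn (KF : ℕ × ℕ → LExp Λ) (ψ : MF Λ (ℕ × ℕ)) :
    ∀ t, LExp.evars (KVFsyn KF ψ t) ⊆ LExp.evars t ∪ ⋃ q, LExp.evars (KF q) := by
  induction ψ with
  | var q => exact fun t => Set.subset_union_left
  | imp a b iha ihb =>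
      intro t
      refine (ihb _).trans (Set.union_subset ?_ Set.subset_union_right)
      rw [LExp.evars]
      exact Set.union_subset (Set.subset_union_left.trans
        (Set.union_subset_union_left _ subset_rfl))
        ((evars_KPsub KF a).trans Set.subset_union_right)
  | box l a iha => exact fun t => iha _
  | top => exact fun t => Set.empty_subset _
  | bot => exact fun t => Set.empty_subset _
  | and a b iha ihb => exact fun t => Set.empty_subset _
  | or a b iha ihb => exact fun t => Set.empty_subset _
  | neg a iha => exact fun t => Set.empty_subset _
  | dia l a iha => exact fun t => Set.empty_subset _

theorem evars_compList (v : ℕ → ℕ) (n : ℕ) (bx : ℕ → List (MF Λ (ℕ × ℕ))) :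
    ∀ k i, ∀ S ∈ compList v n bx k i, LExp.evars S ⊆ v '' Set.Iio n := by
  intro k
  induction k using Nat.strong_induction_on with
  | _ k ih =>
  intro i S hS
  rw [compList_eq] at hS
  simp only [List.mem_flatMap, List.mem_map, List.mem_filter, List.mem_range] at hS
  obtain ⟨j, hj, φ, ⟨hφ, _⟩, rfl⟩ := hS
  refine (evars_KVFsyn _ φ _).trans (Set.union_subset ?_ ?_)
  · rw [LExp.evars]
    exact Set.singleton_subset_iff.mpr ⟨j, hj, rfl⟩
  · refine Set.iUnion_subset fun q => ?_
    by_cases hq : q.1 < k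
    · rw [if_pos hq, evars_unionList]
      exact Set.iUnion₂_subset fun S hS => ih q.1 hq q.2 S hS
    · rw [if_neg hq]; exact Set.empty_subset _

end Syn

/-! ### Safety of the syntactic minimal valuation components -/

section Safety
variable {Λ : Type u}

/-- All `R_λ(·)`-subexpressions have arguments that are safe-for. -/
def RfwSafe (e : LExp Λ) : Prop := ∀ l a, Subexp (.rfw l a) e → SafeFor a

theorem rfwSafe_var (i : ℕ) : RfwSafe (LExp.var i : LExp Λ) := by
  intro l a h; cases h

theorem rfwSafe_bot : RfwSafe (LExp.bot : LExp Λ) := by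
  intro l a h; cases h

theorem rfwSafe_inter {a b : LExp Λ} (ha : RfwSafe a) (hb : RfwSafe b) :
    RfwSafe (.inter a b) := by
  intro l c h
  cases h with
  | interL h => exact ha l c h
  | interR h => exact hb l c h

theorem rfwSafe_union {a b : LExp Λ} (ha : RfwSafe a) (hb : RfwSafe b) :
    RfwSafe (.union a b) := by
  intro l c h
  cases h with
  | unionL h => exact ha l c h
  | unionR h => exact hb l c h

theorem rfwSafe_rinv {l : Λ} {a : LExp Λ} (ha : RfwSafe a) : RfwSafe (.rinv l a) := by
  intro l' c h
  cases h with
  | rinv _ h => exact ha l' c h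

theorem rfwSafe_rbox {l : Λ} {a : LExp Λ} (ha : RfwSafe a) : RfwSafe (.rbox l a) := by
  intro l' c h
  cases h with
  | rbox _ h => exact ha l' c h

theorem rfwSafe_rfw {l : Λ} {a : LExp Λ} (hsf : SafeFor a) (ha : RfwSafe a) :
    RfwSafe (.rfw l a) := by
  intro l' c h
  cases h with
  | refl => exact hsf
  | rfw _ h => exact ha l' c h

theorem safe_iff (e : LExp Λ) : Safe e ↔ SafeFor e ∧ RfwSafe e := Iff.rfl

theorem rfwSafe_unionList {L : List (LExp Λ)} (h : ∀ S ∈ L, RfwSafe S) :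
    RfwSafe (unionList L) := by
  induction L with
  | nil => exact rfwSafe_bot
  | cons a as ih =>
      exact rfwSafe_union (h a (by simp)) (ih fun S hS => h S (List.mem_cons_of_mem _ hS))

theorem rfwSafe_KPsub {KF : ℕ × ℕ → LExp Λ} (hKF : ∀ q, RfwSafe (KF q))
    (ψ : MF Λ (ℕ × ℕ)) : RfwSafe (KPsub KF ψ) := by
  induction ψ with
  | var q => exact hKF q
  | top => intro l a h; cases h
  | bot => exact rfwSafe_bot
  | and a b iha ihb => exact rfwSafe_inter iha ihb
  | or a b iha ihb => exact rfwSafe_union iha ihb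
  | neg a iha => exact rfwSafe_bot
  | imp a b iha ihb => exact rfwSafe_bot
  | dia l a iha => exact rfwSafe_rinv iha
  | box l a iha => exact rfwSafe_rbox iha

theorem safe_KVFsyn {KF : ℕ × ℕ → LExp Λ} (hKF : ∀ q, RfwSafe (KF q))
    {r : ℕ × ℕ → ℕ} {ψ : MF Λ (ℕ × ℕ)} {p : ℕ × ℕ} (hψ : RegBF r ψ p) :
    ∀ t : LExp Λ, SafeFor t → RfwSafe t → Safe (KVFsyn KF ψ t) := by
  induction hψ with
  | var q => exact fun t h1 h2 => ⟨h1, h2⟩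
  | @imp POS ψ p hPOS hlt hψ ih =>
      intro t h1 h2
      exact ih _ (SafeFor.interL h1) (rfwSafe_inter h2 (rfwSafe_KPsub hKF POS))
  | box l hψ ih =>
      intro t h1 h2
      exact ih _ (SafeFor.rfw _ h1) (rfwSafe_rfw h1 h2)

open Classical in
theorem safe_compList (v : ℕ → ℕ) (n : ℕ) (bx : ℕ → List (MF Λ (ℕ × ℕ))) :
    ∀ k i, ∀ S ∈ compList v n bx k i, Safe S := by
  intro k
  induction k using Nat.strong_induction_on with
  | _ k ih =>
  intro i S hS
  rw [compList_eq] at hS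
  simp only [List.mem_flatMap, List.mem_map, List.mem_filter, List.mem_range,
    decide_eq_true_eq] at hS
  obtain ⟨j, hj, φ, ⟨hφ, hrφ⟩, rfl⟩ := hS
  refine safe_KVFsyn ?_ hrφ _ (SafeFor.var _) (rfwSafe_var _)
  intro q
  by_cases hq : q.1 < k
  · rw [if_pos hq]
    exact rfwSafe_unionList fun S hS => (ih q.1 hq q.2 S hS).2
  · rw [if_neg hq]; exact rfwSafe_bot

end Safety

/-! ### Unravelling positive formulas into restrictedly positive FO formulas -/

section KrPos
variable {Λ : Type u}

/-- An always-false atom (with only the designated free variable `0`). -/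
def falsumA : KrF Λ := .atom 0 (.inter (.var 0) .bot)

/-- An always-true atom (with only the designated free variable `0`). -/
def truthA : KrF Λ := .atom 0 (.var 0)

theorem holds_falsumA (F : Frame Λ) (g : ℕ → F.W) : ¬ KrF.holds F g (falsumA : KrF Λ) := by
  simp [falsumA, KrF.holds, LExp.den]

theorem holds_truthA (F : Frame Λ) (g : ℕ → F.W) : KrF.holds F g (truthA : KrF Λ) := by
  simp [truthA, KrF.holds, LExp.den]

theorem safe_falsumExp : Safe (LExp.inter (.var 0) .bot : LExp Λ) := by
  constructor
  · exact SafeFor.interL (SafeFor.var 0)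
  · intro l a h
    cases h with
    | interL h => cases h
    | interR h => cases h

/-- Finite disjunction of restrictedly positive formulas. -/
def orKr : List (KrF Λ) → KrF Λ
  | [] => falsumA
  | a :: as => .or a (orKr as)

theorem holds_orKr (F : Frame Λ) (g : ℕ → F.W) (L : List (KrF Λ)) :
    KrF.holds F g (orKr L) ↔ ∃ β ∈ L, KrF.holds F g β := by
  induction L with
  | nil => simpa [orKr] using holds_falsumA F g
  | cons a as ih => simp [orKr, KrF.holds, ih]

/-- Number of fresh variables needed to unravel a formula. -/
def cntP : MF Λ (ℕ × ℕ) → ℕ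
  | .and a b => cntP a + cntP b
  | .or a b => cntP a + cntP b
  | .dia _ a => cntP a + 1
  | .box _ a => cntP a + 1
  | _ => 0

/-- Unravelling of a positive formula `a` into a restrictedly positive formula expressing
`x_y ∈ KP^a`, the set variable `p_q` being interpreted as the union of the expressions in
`C q`; fresh variables are taken from `m` on. -/
def krPos (C : ℕ × ℕ → List (LExp Λ)) : MF Λ (ℕ × ℕ) → ℕ → ℕ → KrF Λ
  | .var q, y, _ => orKr ((C q).map fun S => .atom y S)
  | .top, _, _ => truthA
  | .and a b, y, m => .and (krPos C a y m) (krPos C b y (m + cntP a))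
  | .or a b, y, m => .or (krPos C a y m) (krPos C b y (m + cntP a))
  | .dia l a, y, m => .ex m l y (krPos C a m (m + 1))
  | .box l a, y, m => .all m l y (krPos C a m (m + 1))
  | _, _, _ => falsumA

theorem krPos_holds {F : Frame Λ} {C : ℕ × ℕ → List (LExp Λ)} {M : ℕ}
    (hC : ∀ q, ∀ S ∈ C q, ∀ idx ∈ LExp.evars S, idx < M) {a : MF Λ (ℕ × ℕ)}
    (ha : Positive a) :
    ∀ (y m : ℕ), M ≤ m → ∀ g : ℕ → F.W,
      (KrF.holds F g (krPos C a y m) ↔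
        g y ∈ KPsem F (fun q => ⋃ S ∈ C q, LExp.den F g S) a) := by
  induction ha with
  | var q =>
      intro y m hm g
      rw [krPos, holds_orKr]
      simp only [List.mem_map]
      constructor
      · rintro ⟨β, ⟨S, hS, rfl⟩, hβ⟩
        exact Set.mem_biUnion hS hβ
      · intro h
        have h' : g y ∈ ⋃ S ∈ C q, LExp.den F g S := h
        rw [Set.mem_iUnion₂] at h'
        obtain ⟨S, hS, h'⟩ := h'
        exact ⟨.atom y S, ⟨S, hS, rfl⟩, h'⟩
  | top => intro y m hm g; simpa [KPsem, krPos] using holds_truthA F g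
  | bot =>
      intro y m hm g
      simpa [KPsem, krPos] using holds_falsumA F g
  | @and a b ha hb iha ihb =>
      intro y m hm g
      rw [krPos]
      show KrF.holds F g _ ∧ KrF.holds F g _ ↔ _
      rw [iha y m hm g, ihb y (m + cntP a) (le_trans hm (Nat.le_add_right m _)) g]
      rfl
  | @or a b ha hb iha ihb =>
      intro y m hm g
      rw [krPos]
      show KrF.holds F g _ ∨ KrF.holds F g _ ↔ _
      rw [iha y m hm g, ihb y (m + cntP a) (le_trans hm (Nat.le_add_right m _)) g]
      rfl
  | @dia l a ha iha =>
      intro y m hm g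
      rw [krPos]
      show (∃ w, F.R l (g y) w ∧ KrF.holds F (Function.update g m w) _) ↔ _
      have key : ∀ w : F.W, KrF.holds F (Function.update g m w) (krPos C a m (m + 1)) ↔
          w ∈ KPsem F (fun q => ⋃ S ∈ C q, LExp.den F g S) a := by
        intro w
        rw [iha m (m + 1) (le_trans hm (Nat.le_succ m)) (Function.update g m w)]
        have h1 : Function.update g m w m = w := Function.update_self _ _ _
        have h2 : (fun q => ⋃ S ∈ C q, LExp.den F (Function.update g m w) S) =
            fun q => ⋃ S ∈ C q, LExp.den F g S := by
          funext q
          refine Set.iUnion₂_congr fun S hS => ?_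
          refine den_congr F S fun idx hidx => ?_
          exact Function.update_of_ne (Nat.ne_of_lt (lt_of_lt_of_le (hC q S hS idx hidx) hm)) _ _
        rw [h1, h2]
      constructor
      · rintro ⟨w, hw, hh⟩
        exact ⟨w, hw, (key w).mp hh⟩
      · rintro ⟨w, hw, hh⟩
        exact ⟨w, hw, (key w).mpr hh⟩
  | @box l a ha iha =>
      intro y m hm g
      rw [krPos]
      show (∀ w, F.R l (g y) w → KrF.holds F (Function.update g m w) _) ↔ _
      have key : ∀ w : F.W, KrF.holds F (Function.update g m w) (krPos C a m (m + 1)) ↔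
          w ∈ KPsem F (fun q => ⋃ S ∈ C q, LExp.den F g S) a := by
        intro w
        rw [iha m (m + 1) (le_trans hm (Nat.le_succ m)) (Function.update g m w)]
        have h1 : Function.update g m w m = w := Function.update_self _ _ _
        have h2 : (fun q => ⋃ S ∈ C q, LExp.den F (Function.update g m w) S) =
            fun q => ⋃ S ∈ C q, LExp.den F g S := by
          funext q
          refine Set.iUnion₂_congr fun S hS => ?_
          refine den_congr F S fun idx hidx => ?_
          exact Function.update_of_ne (Nat.ne_of_lt (lt_of_lt_of_le (hC q S hS idx hidx) hm)) _ _
        rw [h1, h2]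
      exact forall_congr' fun w => imp_congr_right fun hw => key w

end KrPos

/-! ### Bookkeeping lemmas for `krPos` -/

section KrPosBook
variable {Λ : Type u}

theorem gkok_mono {U U' : Set ℕ} (hU : U ⊆ U') :
    ∀ (φ : KrF Λ) (e : Bool), KrF.GKok U e φ → KrF.GKok U' e φ := by
  intro φ
  induction φ generalizing U U' with
  | atom y E => intro e; cases e <;> exact fun h => h.trans hU
  | and a b iha ihb =>
      intro e; cases e <;> exact fun h => ⟨iha hU _ h.1, ihb hU _ h.2⟩
  | or a b iha ihb =>
      intro e; cases e <;> exact fun h => ⟨iha hU _ h.1, ihb hU _ h.2⟩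
  | all y l x β ihβ =>
      intro e
      cases e with
      | false => exact fun h => ihβ (Set.insert_subset_insert hU) false h
      | true => exact fun h => ihβ hU true h
  | ex y l x β ihβ =>
      intro e; cases e <;> exact fun h => ihβ hU true h

theorem bv_falsumA : KrF.bv (falsumA : KrF Λ) = ∅ := rfl
theorem bv_truthA : KrF.bv (truthA : KrF Λ) = ∅ := rfl

theorem bv_orKr (L : List (KrF Λ)) : KrF.bv (orKr L) = ⋃ β ∈ L, KrF.bv β := by
  induction L with
  | nil => simp [orKr, KrF.bv, falsumA]
  | cons a as ih => simp [orKr, KrF.bv, ih]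

theorem bv_krPos (C : ℕ × ℕ → List (LExp Λ)) (a : MF Λ (ℕ × ℕ)) :
    ∀ y m, KrF.bv (krPos C a y m) ⊆ Set.Ico m (m + cntP a) := by
  induction a with
  | var q =>
      intro y m
      rw [krPos, bv_orKr]
      refine Set.iUnion₂_subset fun β hβ => ?_
      obtain ⟨S, hS, rfl⟩ := List.mem_map.mp hβ
      exact (by simp [KrF.bv] : KrF.bv (.atom y S) ⊆ _)
  | top => intro y m; rw [krPos, bv_truthA]; exact Set.empty_subset _
  | bot => intro y m; exact (bv_falsumA ▸ Set.empty_subset _)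
  | and a b iha ihb =>
      intro y m
      rw [krPos]
      show KrF.bv _ ∪ KrF.bv _ ⊆ _
      refine Set.union_subset ((iha y m).trans ?_) ((ihb y (m + cntP a)).trans ?_) <;>
        · intro z hz
          simp only [Set.mem_Ico, cntP] at hz ⊢
          omega
  | or a b iha ihb =>
      intro y m
      rw [krPos]
      show KrF.bv _ ∪ KrF.bv _ ⊆ _
      refine Set.union_subset ((iha y m).trans ?_) ((ihb y (m + cntP a)).trans ?_) <;>
        · intro z hz
          simp only [Set.mem_Ico, cntP] at hz ⊢
          omega
  | dia l a iha =>
      intro y m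
      rw [krPos]
      show insert m (KrF.bv _) ⊆ _
      refine Set.insert_subset (by simp only [cntP, Set.mem_Ico]; omega) ((iha m (m + 1)).trans ?_)
      intro z hz
      simp only [Set.mem_Ico, cntP] at hz ⊢
      omega
  | box l a iha =>
      intro y m
      rw [krPos]
      show insert m (KrF.bv _) ⊆ _
      refine Set.insert_subset (by simp only [cntP, Set.mem_Ico]; omega) ((iha m (m + 1)).trans ?_)
      intro z hz
      simp only [Set.mem_Ico, cntP] at hz ⊢
      omega
  | neg a iha => intro y m; exact (bv_falsumA ▸ Set.empty_subset _)
  | imp a b iha ihb => intro y m; exact (bv_falsumA ▸ Set.empty_subset _)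

theorem cleanBound_orKr (L : List (KrF Λ)) (h : ∀ β ∈ L, KrF.CleanBound β ∧ KrF.bv β = ∅) :
    KrF.CleanBound (orKr L) := by
  induction L with
  | nil => exact trivial
  | cons a as ih =>
      refine ⟨(h a (by simp)).1, ih fun β hβ => h β (List.mem_cons_of_mem _ hβ), ?_⟩
      rw [(h a (by simp)).2, Set.empty_inter]

theorem cleanBound_krPos (C : ℕ × ℕ → List (LExp Λ)) (a : MF Λ (ℕ × ℕ)) :
    ∀ y m, KrF.CleanBound (krPos C a y m) := by
  induction a with
  | var q =>
      intro y m
      rw [krPos]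
      exact cleanBound_orKr _ fun β hβ => by
        obtain ⟨S, hS, rfl⟩ := List.mem_map.mp hβ
        exact ⟨trivial, rfl⟩
  | top => intro y m; exact trivial
  | bot => intro y m; exact trivial
  | and a b iha ihb =>
      intro y m
      refine ⟨iha y m, ihb y (m + cntP a), ?_⟩
      have h1 := bv_krPos C a y m
      have h2 := bv_krPos C b y (m + cntP a)
      rw [Set.eq_empty_iff_forall_notMem]
      intro z ⟨hz1, hz2⟩
      have := h1 hz1
      have := h2 hz2
      simp only [Set.mem_Ico] at *
      omega
  | or a b iha ihb =>
      intro y m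
      refine ⟨iha y m, ihb y (m + cntP a), ?_⟩
      have h1 := bv_krPos C a y m
      have h2 := bv_krPos C b y (m + cntP a)
      rw [Set.eq_empty_iff_forall_notMem]
      intro z ⟨hz1, hz2⟩
      have := h1 hz1
      have := h2 hz2
      simp only [Set.mem_Ico] at *
      omega
  | dia l a iha =>
      intro y m
      refine ⟨iha m (m + 1), fun hm => ?_⟩
      have := bv_krPos C a m (m + 1) hm
      rw [Set.mem_Ico] at this
      omega
  | box l a iha =>
      intro y m
      refine ⟨iha m (m + 1), fun hm => ?_⟩
      have := bv_krPos C a m (m + 1) hm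
      rw [Set.mem_Ico] at this
      omega
  | neg a iha => intro y m; exact trivial
  | imp a b iha ihb => intro y m; exact trivial

theorem fv_falsumA : KrF.fv (falsumA : KrF Λ) = {0} := by
  simp [falsumA, KrF.fv, LExp.evars]

theorem fv_truthA : KrF.fv (truthA : KrF Λ) = {0} := by
  simp [truthA, KrF.fv, LExp.evars]

theorem fv_orKr (L : List (KrF Λ)) (W : Set ℕ) (h0 : (0 : ℕ) ∈ W)
    (h : ∀ β ∈ L, KrF.fv β ⊆ W) : KrF.fv (orKr L) ⊆ W := by
  induction L with
  | nil => rw [orKr, fv_falsumA]; exact Set.singleton_subset_iff.mpr h0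
  | cons a as ih =>
      exact Set.union_subset (h a (by simp)) (ih fun β hβ => h β (List.mem_cons_of_mem _ hβ))

theorem fv_krPos (C : ℕ × ℕ → List (LExp Λ)) {W : Set ℕ} (h0 : (0 : ℕ) ∈ W)
    (hC : ∀ q, ∀ S ∈ C q, LExp.evars S ⊆ W) (a : MF Λ (ℕ × ℕ)) :
    ∀ y m, (∀ idx ∈ W, idx < m) → KrF.fv (krPos C a y m) ⊆ insert y W := by
  induction a with
  | var q =>
      intro y m hm
      rw [krPos]
      refine fv_orKr _ _ (Set.mem_insert_of_mem _ h0) fun β hβ => ?_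
      obtain ⟨S, hS, rfl⟩ := List.mem_map.mp hβ
      show insert y (LExp.evars S) ⊆ insert y W
      exact Set.insert_subset_insert (hC q S hS)
  | top =>
      intro y m hm
      rw [krPos, fv_truthA]
      exact Set.singleton_subset_iff.mpr (Set.mem_insert_of_mem _ h0)
  | bot =>
      intro y m hm
      have he : KrF.fv (falsumA : KrF Λ) ⊆ insert y W :=
        fv_falsumA ▸ Set.singleton_subset_iff.mpr (Set.mem_insert_of_mem _ h0)
      exact he
  | and a b iha ihb =>
      intro y m hm
      exact Set.union_subset (iha y m hm)
        (ihb y (m + cntP a) fun idx hidx => lt_of_lt_of_le (hm idx hidx) (Nat.le_add_right _ _))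
  | or a b iha ihb =>
      intro y m hm
      exact Set.union_subset (iha y m hm)
        (ihb y (m + cntP a) fun idx hidx => lt_of_lt_of_le (hm idx hidx) (Nat.le_add_right _ _))
  | dia l a iha =>
      intro y m hm
      rw [krPos]
      show insert y (KrF.fv _ \ {m}) ⊆ insert y W
      refine Set.insert_subset_insert ?_
      have := iha m (m + 1) fun idx hidx => lt_of_lt_of_le (hm idx hidx) (Nat.le_succ _)
      intro z ⟨hz1, hz2⟩
      rcases this hz1 with h | h
      · exact absurd h hz2
      · exact h
  | box l a iha =>
      intro y m hm
      rw [krPos]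
      show insert y (KrF.fv _ \ {m}) ⊆ insert y W
      refine Set.insert_subset_insert ?_
      have := iha m (m + 1) fun idx hidx => lt_of_lt_of_le (hm idx hidx) (Nat.le_succ _)
      intro z ⟨hz1, hz2⟩
      rcases this hz1 with h | h
      · exact absurd h hz2
      · exact h
  | neg a iha =>
      intro y m hm
      have he : KrF.fv (falsumA : KrF Λ) ⊆ insert y W :=
        fv_falsumA ▸ Set.singleton_subset_iff.mpr (Set.mem_insert_of_mem _ h0)
      exact he
  | imp a b iha ihb =>
      intro y m hm
      have he : KrF.fv (falsumA : KrF Λ) ⊆ insert y W :=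
        fv_falsumA ▸ Set.singleton_subset_iff.mpr (Set.mem_insert_of_mem _ h0)
      exact he

theorem gkok_falsumA {U : Set ℕ} (h0 : (0 : ℕ) ∈ U) (e : Bool) :
    KrF.GKok U e (falsumA : KrF Λ) := by
  cases e <;> · show LExp.evars _ ⊆ U; simp [LExp.evars]; exact h0

theorem gkok_truthA {U : Set ℕ} (h0 : (0 : ℕ) ∈ U) (e : Bool) :
    KrF.GKok U e (truthA : KrF Λ) := by
  cases e <;> · show LExp.evars _ ⊆ U; simp [LExp.evars]; exact h0

theorem gkok_orKr {U : Set ℕ} (h0 : (0 : ℕ) ∈ U) (e : Bool) (L : List (KrF Λ))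
    (h : ∀ β ∈ L, KrF.GKok U e β) : KrF.GKok U e (orKr L) := by
  induction L with
  | nil => exact gkok_falsumA h0 e
  | cons a as ih =>
      cases e <;>
        exact ⟨h a (by simp), ih fun β hβ => h β (List.mem_cons_of_mem _ hβ)⟩

theorem gkok_krPos (C : ℕ × ℕ → List (LExp Λ)) (a : MF Λ (ℕ × ℕ)) :
    ∀ (U : Set ℕ) (e : Bool), (0 : ℕ) ∈ U → (∀ q, ∀ S ∈ C q, LExp.evars S ⊆ U) →
      ∀ y m, KrF.GKok U e (krPos C a y m) := by
  induction a with
  | var q =>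
      intro U e h0 hC y m
      rw [krPos]
      refine gkok_orKr h0 e _ fun β hβ => ?_
      obtain ⟨S, hS, rfl⟩ := List.mem_map.mp hβ
      cases e <;> exact hC q S hS
  | top => intro U e h0 hC y m; exact gkok_truthA h0 e
  | bot => intro U e h0 hC y m; exact gkok_falsumA h0 e
  | and a b iha ihb =>
      intro U e h0 hC y m
      cases e <;> exact ⟨iha U _ h0 hC y m, ihb U _ h0 hC y (m + cntP a)⟩
  | or a b iha ihb =>
      intro U e h0 hC y m
      cases e <;> exact ⟨iha U _ h0 hC y m, ihb U _ h0 hC y (m + cntP a)⟩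
  | dia l a iha =>
      intro U e h0 hC y m
      cases e <;> exact iha U true h0 hC m (m + 1)
  | box l a iha =>
      intro U e h0 hC y m
      cases e with
      | false =>
          exact iha (insert m U) false (Set.mem_insert_of_mem _ h0)
            (fun q S hS => (hC q S hS).trans (Set.subset_insert _ _)) m (m + 1)
      | true => exact iha U true h0 hC m (m + 1)
  | neg a iha => intro U e h0 hC y m; exact gkok_falsumA h0 e
  | imp a b iha ihb => intro U e h0 hC y m; exact gkok_falsumA h0 e

theorem atomsAll_orKr (P : LExp Λ → Prop) (hbot : P (.inter (.var 0) .bot))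
    (L : List (KrF Λ)) (h : ∀ β ∈ L, KrF.AtomsAll P β) : KrF.AtomsAll P (orKr L) := by
  induction L with
  | nil => exact hbot
  | cons a as ih => exact ⟨h a (by simp), ih fun β hβ => h β (List.mem_cons_of_mem _ hβ)⟩

theorem atomsAll_krPos (C : ℕ × ℕ → List (LExp Λ)) (a : MF Λ (ℕ × ℕ))
    (hC : ∀ q, ∀ S ∈ C q, Safe S) :
    ∀ y m, KrF.AtomsAll Safe (krPos C a y m) := by
  induction a with
  | var q =>
      intro y m
      refine atomsAll_orKr _ safe_falsumExp _ fun β hβ => ?_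
      obtain ⟨S, hS, rfl⟩ := List.mem_map.mp hβ
      exact hC q S hS
  | top => intro y m; exact ⟨SafeFor.var 0, fun l a h => by cases h⟩
  | bot => intro y m; exact safe_falsumExp
  | and a b iha ihb => intro y m; exact ⟨iha y m, ihb y (m + cntP a)⟩
  | or a b iha ihb => intro y m; exact ⟨iha y m, ihb y (m + cntP a)⟩
  | dia l a iha => intro y m; exact iha m (m + 1)
  | box l a iha => intro y m; exact iha m (m + 1)
  | neg a iha => intro y m; exact safe_falsumExp
  | imp a b iha ihb => intro y m; exact safe_falsumExp

end KrPosBook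

/-! ### Disjunctive normal form for generalized Sahlqvist antecedents -/

section Dj
variable {Λ : Type u}

/-- A "diagram": a finite rooted labelled tree-like structure on nodes `0, …, n-1`
(node `0` the root), each node `i ≥ 1` having an edge from `edge i = some (p, l)`,
together with lists of formulas attached to the nodes. -/
structure Dj (Λ : Type u) where
  n : ℕ
  edge : ℕ → Option (ℕ × Λ)
  base : ℕ → List (MF Λ (ℕ × ℕ))

/-- Box-formula-or-negative-formula classification. -/
def BN : MF Λ (ℕ × ℕ) → Prop
  | .neg POS => Positive POS
  | ψ => ∃ p, RegBF Prod.fst ψ p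

/-- Well-formedness of a diagram. -/
def Dwf (D : Dj Λ) : Prop :=
  0 < D.n ∧ (∀ i, 0 < i → i < D.n → ∃ pl, D.edge i = some pl ∧ pl.1 < i) ∧
    ∀ j < D.n, ∀ ψ ∈ D.base j, BN ψ

/-- Satisfaction of a diagram at a point. -/
def Dsat (F : Frame Λ) (θ : ℕ × ℕ → Set F.W) (D : Dj Λ) (w : F.W) : Prop :=
  ∃ h : ℕ → F.W, h 0 = w ∧
    (∀ i, 0 < i → i < D.n → ∀ p l, D.edge i = some (p, l) → F.R l (h p) (h i)) ∧
    ∀ j < D.n, ∀ ψ ∈ D.base j, sat F θ (h j) ψ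

/-- The one-node diagram with a single formula. -/
def single (ψ : MF Λ (ℕ × ℕ)) : Dj Λ :=
  ⟨1, fun _ => none, fun j => if j = 0 then [ψ] else []⟩

/-- Prefixing a diagram with a new root and an `l`-edge. -/
def pre (l : Λ) (D : Dj Λ) : Dj Λ :=
  ⟨D.n + 1,
   fun i => if i = 1 then some (0, l) else (D.edge (i - 1)).map fun pl => (pl.1 + 1, pl.2),
   fun j => if j = 0 then [] else D.base (j - 1)⟩

/-- Merging two diagrams at their roots. -/
def merge (D₁ D₂ : Dj Λ) : Dj Λ :=
  ⟨D₁.n + D₂.n - 1,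
   fun i => if i < D₁.n then D₁.edge i
     else (D₂.edge (i - D₁.n + 1)).map fun pl =>
       (if pl.1 = 0 then 0 else D₁.n + pl.1 - 1, pl.2),
   fun j => if j = 0 then D₁.base 0 ++ D₂.base 0
     else if j < D₁.n then D₁.base j else D₂.base (j - D₁.n + 1)⟩

theorem single_n (ψ : MF Λ (ℕ × ℕ)) : (single ψ).n = 1 := rfl
theorem single_edge (ψ : MF Λ (ℕ × ℕ)) (i : ℕ) : (single ψ).edge i = none := rfl
theorem single_base (ψ : MF Λ (ℕ × ℕ)) (j : ℕ) :
    (single ψ).base j = if j = 0 then [ψ] else [] := rfl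
theorem pre_n (l : Λ) (D : Dj Λ) : (pre l D).n = D.n + 1 := rfl
theorem pre_edge (l : Λ) (D : Dj Λ) (i : ℕ) :
    (pre l D).edge i = if i = 1 then some (0, l)
      else (D.edge (i - 1)).map fun pl => (pl.1 + 1, pl.2) := rfl
theorem pre_base (l : Λ) (D : Dj Λ) (j : ℕ) :
    (pre l D).base j = if j = 0 then [] else D.base (j - 1) := rfl
theorem merge_n (D₁ D₂ : Dj Λ) : (merge D₁ D₂).n = D₁.n + D₂.n - 1 := rfl
theorem merge_edge (D₁ D₂ : Dj Λ) (i : ℕ) :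
    (merge D₁ D₂).edge i = if i < D₁.n then D₁.edge i
      else (D₂.edge (i - D₁.n + 1)).map fun pl =>
        (if pl.1 = 0 then 0 else D₁.n + pl.1 - 1, pl.2) := rfl
theorem merge_base (D₁ D₂ : Dj Λ) (j : ℕ) :
    (merge D₁ D₂).base j = if j = 0 then D₁.base 0 ++ D₂.base 0
      else if j < D₁.n then D₁.base j else D₂.base (j - D₁.n + 1) := rfl

/-- The list of diagrams of a generalized Sahlqvist antecedent. -/
def disj : MF Λ (ℕ × ℕ) → List (Dj Λ)
  | .and a b => (disj a).flatMap fun D₁ => (disj b).map fun D₂ => merge D₁ D₂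
  | .or a b => disj a ++ disj b
  | .dia l a => (disj a).map (pre l)
  | ψ => [single ψ]

theorem single_wf {ψ : MF Λ (ℕ × ℕ)} (h : BN ψ) : Dwf (single ψ) := by
  refine ⟨Nat.one_pos, ?_, ?_⟩
  · intro i hi hi'
    rw [single_n] at hi'
    omega
  · intro j hj χ hχ
    rw [single_n] at hj
    have hj0 : j = 0 := by omega
    subst hj0
    rw [single_base, if_pos rfl, List.mem_singleton] at hχ
    exact hχ ▸ h

theorem pre_wf {l : Λ} {D : Dj Λ} (h : Dwf D) : Dwf (pre l D) := by
  obtain ⟨h1, h2, h3⟩ := h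
  refine ⟨by rw [pre_n]; omega, ?_, ?_⟩
  · intro i hi hi'
    rw [pre_n] at hi'
    rw [pre_edge]
    by_cases he : i = 1
    · rw [if_pos he]; exact ⟨(0, l), rfl, by omega⟩
    · rw [if_neg he]
      obtain ⟨pl, hpl, hplt⟩ := h2 (i - 1) (by omega) (by omega)
      exact ⟨(pl.1 + 1, pl.2), by rw [hpl]; rfl, by omega⟩
  · intro j hj ψ hψ
    rw [pre_n] at hj
    rw [pre_base] at hψ
    by_cases he : j = 0
    · rw [if_pos he] at hψ; cases hψ
    · rw [if_neg he] at hψ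
      exact h3 (j - 1) (by omega) ψ hψ

theorem merge_wf {D₁ D₂ : Dj Λ} (h₁ : Dwf D₁) (h₂ : Dwf D₂) : Dwf (merge D₁ D₂) := by
  obtain ⟨ha1, ha2, ha3⟩ := h₁
  obtain ⟨hb1, hb2, hb3⟩ := h₂
  refine ⟨by rw [merge_n]; omega, ?_, ?_⟩
  · intro i hi hi'
    rw [merge_n] at hi'
    rw [merge_edge]
    by_cases hc : i < D₁.n
    · obtain ⟨pl, hpl, hplt⟩ := ha2 i hi hc
      exact ⟨pl, by rw [if_pos hc]; exact hpl, hplt⟩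
    · obtain ⟨pl, hpl, hplt⟩ := hb2 (i - D₁.n + 1) (by omega) (by omega)
      refine ⟨((if pl.1 = 0 then 0 else D₁.n + pl.1 - 1), pl.2), ?_, ?_⟩
      · rw [if_neg hc, hpl]; rfl
      · by_cases hz : pl.1 = 0
        · rw [if_pos hz]; omega
        · rw [if_neg hz]; omega
  · intro j hj ψ hψ
    rw [merge_n] at hj
    rw [merge_base] at hψ
    by_cases he : j = 0
    · rw [if_pos he] at hψ
      rcases List.mem_append.mp hψ with h | h
      · exact ha3 0 ha1 ψ h
      · exact hb3 0 hb1 ψ h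
    · rw [if_neg he] at hψ
      by_cases hc : j < D₁.n
      · rw [if_pos hc] at hψ
        exact ha3 j hc ψ hψ
      · rw [if_neg hc] at hψ
        exact hb3 (j - D₁.n + 1) (by omega) ψ hψ

theorem single_sat (F : Frame Λ) (θ : ℕ × ℕ → Set F.W) (ψ : MF Λ (ℕ × ℕ)) (w : F.W) :
    Dsat F θ (single ψ) w ↔ sat F θ w ψ := by
  constructor
  · rintro ⟨h, hr, _, hb⟩
    have := hb 0 (by rw [single_n]; omega) ψ (by rw [single_base, if_pos rfl]; exact List.mem_singleton.mpr rfl)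
    rwa [hr] at this
  · intro hs
    refine ⟨fun _ => w, rfl, ?_, ?_⟩
    · intro i hi hi'
      rw [single_n] at hi'
      omega
    · intro j hj χ hχ
      rw [single_n] at hj
      have hj0 : j = 0 := by omega
      subst hj0
      rw [single_base, if_pos rfl, List.mem_singleton] at hχ
      exact hχ ▸ hs

theorem pre_sat (F : Frame Λ) (θ : ℕ × ℕ → Set F.W) (l : Λ) {D : Dj Λ} (hwf : Dwf D)
    (w : F.W) : Dsat F θ (pre l D) w ↔ ∃ v, F.R l w v ∧ Dsat F θ D v := by
  constructor
  · rintro ⟨h, hr, he, hb⟩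
    refine ⟨h 1, ?_, fun i => h (i + 1), rfl, ?_, ?_⟩
    · have := he 1 Nat.one_pos (by rw [pre_n]; have := hwf.1; omega) 0 l (by rw [pre_edge, if_pos rfl])
      rwa [hr] at this
    · intro i hi hi' p l' hpl
      refine he (i + 1) (by omega) (by rw [pre_n]; omega) (p + 1) l' ?_
      rw [pre_edge, if_neg (by omega : ¬ i + 1 = 1), Nat.add_sub_cancel, hpl]
      rfl
    · intro j hj ψ hψ
      exact hb (j + 1) (by rw [pre_n]; omega) ψ
        (by rw [pre_base, if_neg (by omega : ¬ j + 1 = 0), Nat.add_sub_cancel]; exact hψ)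
  · rintro ⟨v, hv, h, hr, he, hb⟩
    refine ⟨fun i => if i = 0 then w else h (i - 1), by beta_reduce; rw [if_pos rfl], ?_, ?_⟩
    · intro i hi hi' p l' hpl
      beta_reduce
      rw [pre_n] at hi'
      rw [pre_edge] at hpl
      by_cases h1 : i = 1
      · rw [if_pos h1] at hpl
        injection hpl with hpl'
        obtain ⟨rfl, rfl⟩ := Prod.mk.inj hpl'
        subst h1
        rw [if_neg (by omega : ¬ (1 : ℕ) = 0), if_pos rfl]
        simpa [hr] using hv
      · rw [if_neg h1] at hpl
        obtain ⟨⟨p', l''⟩, hpl', heq⟩ := Option.map_eq_some_iff.mp hpl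
        have hp' : p' + 1 = p := congrArg Prod.fst heq
        have hl' : l'' = l' := congrArg Prod.snd heq
        subst hl'
        have hlt : p' < i - 1 := by
          obtain ⟨pl, hplx, hpltx⟩ := hwf.2.1 (i - 1) (by omega) (by omega)
          rw [hplx] at hpl'
          have := Option.some.inj hpl'
          rw [this] at hpltx
          exact hpltx
        have := he (i - 1) (by omega) (by omega) p' l'' hpl'
        rw [if_neg (by omega : ¬ i = 0), if_neg (by omega : ¬ p = 0), ← hp', Nat.add_sub_cancel]
        exact this
    · intro j hj ψ hψ
      beta_reduce
      rw [pre_n] at hj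
      rw [pre_base] at hψ
      by_cases h0 : j = 0
      · rw [if_pos h0] at hψ; cases hψ
      · rw [if_neg h0] at hψ
        rw [if_neg h0]
        exact hb (j - 1) (by omega) ψ hψ

theorem merge_sat (F : Frame Λ) (θ : ℕ × ℕ → Set F.W) {D₁ D₂ : Dj Λ} (h₁ : Dwf D₁)
    (h₂ : Dwf D₂) (w : F.W) :
    Dsat F θ (merge D₁ D₂) w ↔ Dsat F θ D₁ w ∧ Dsat F θ D₂ w := by
  obtain ⟨ha1, ha2, ha3⟩ := h₁
  obtain ⟨hb1, hb2, hb3⟩ := h₂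
  constructor
  · rintro ⟨h, hr, he, hb⟩
    constructor
    · refine ⟨h, hr, ?_, ?_⟩
      · intro i hi hi' p l hpl
        refine he i hi (by rw [merge_n]; omega) p l ?_
        rw [merge_edge, if_pos hi']
        exact hpl
      · intro j hj ψ hψ
        refine hb j (by rw [merge_n]; omega) ψ ?_
        rw [merge_base]
        by_cases h0 : j = 0
        · rw [if_pos h0]
          subst h0
          exact List.mem_append.mpr (Or.inl hψ)
        · rw [if_neg h0, if_pos hj]
          exact hψ
    · refine ⟨fun i => if i = 0 then w else h (D₁.n + i - 1), by beta_reduce; rw [if_pos rfl], ?_, ?_⟩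
      · intro i hi hi' p l hpl
        beta_reduce
        have hie : ¬ D₁.n + i - 1 < D₁.n := by omega
        obtain ⟨pl, hplx, hpltx⟩ := hb2 i hi hi'
        have hpp : pl = (p, l) := by rw [hplx] at hpl; exact Option.some.inj hpl
        subst hpp
        have := he (D₁.n + i - 1) (by omega) (by rw [merge_n]; omega)
          (if p = 0 then 0 else D₁.n + p - 1) l ?_
        · rw [if_neg (by omega : ¬ i = 0)]
          by_cases hp0 : p = 0
          · subst hp0
            rw [if_pos rfl]
            rwa [if_pos rfl, hr] at this
          · rw [if_neg hp0]
            rwa [if_neg hp0] at this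
        · rw [merge_edge, if_neg hie]
          have harr : D₁.n + i - 1 - D₁.n + 1 = i := by omega
          rw [harr, hplx]
          rfl
      · intro j hj ψ hψ
        beta_reduce
        by_cases h0 : j = 0
        · subst h0
          rw [if_pos rfl, ← hr]
          refine hb 0 (by rw [merge_n]; omega) ψ ?_
          rw [merge_base, if_pos rfl]
          exact List.mem_append.mpr (Or.inr hψ)
        · rw [if_neg h0]
          refine hb (D₁.n + j - 1) (by rw [merge_n]; omega) ψ ?_
          rw [merge_base, if_neg (by omega : ¬ D₁.n + j - 1 = 0),
            if_neg (by omega : ¬ D₁.n + j - 1 < D₁.n)]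
          have harr : D₁.n + j - 1 - D₁.n + 1 = j := by omega
          rw [harr]
          exact hψ
  · rintro ⟨⟨h1, hr1, he1, hb1'⟩, ⟨h2, hr2, he2, hb2'⟩⟩
    refine ⟨fun i => if i < D₁.n then h1 i else h2 (i - D₁.n + 1),
      by beta_reduce; rw [if_pos ha1]; exact hr1, ?_, ?_⟩
    · intro i hi hi' p l hpl
      beta_reduce
      rw [merge_n] at hi'
      rw [merge_edge] at hpl
      by_cases hc : i < D₁.n
      · rw [if_pos hc] at hpl
        obtain ⟨pl, hpl', hplt⟩ := ha2 i hi hc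
        have hpp : pl = (p, l) := by rw [hpl'] at hpl; exact Option.some.inj hpl
        subst hpp
        rw [if_pos hc, if_pos (by omega : p < D₁.n)]
        exact he1 i hi hc p l hpl
      · rw [if_neg hc] at hpl
        obtain ⟨⟨p', l'⟩, hpl', heq⟩ := Option.map_eq_some_iff.mp hpl
        have hp : (if p' = 0 then 0 else D₁.n + p' - 1) = p := congrArg Prod.fst heq
        have hl : l' = l := congrArg Prod.snd heq
        subst hl
        have hi2 : 0 < i - D₁.n + 1 := by omega
        have hi2' : i - D₁.n + 1 < D₂.n := by omega
        have hR := he2 (i - D₁.n + 1) hi2 hi2' p' l' hpl'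
        have hplt' : p' < i - D₁.n + 1 := by
          obtain ⟨pl, hplx, hpltx⟩ := hb2 (i - D₁.n + 1) hi2 hi2'
          rw [hplx] at hpl'
          have := Option.some.inj hpl'
          rw [this] at hpltx
          exact hpltx
        rw [if_neg hc, ← hp]
        by_cases hp0 : p' = 0
        · subst hp0
          rw [if_pos rfl, if_pos ha1, hr1, ← hr2]
          exact hR
        · rw [if_neg hp0, if_neg (by omega : ¬ D₁.n + p' - 1 < D₁.n)]
          have harr : D₁.n + p' - 1 - D₁.n + 1 = p' := by omega
          rw [harr]
          exact hR
    · intro j hj ψ hψ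
      beta_reduce
      rw [merge_n] at hj
      rw [merge_base] at hψ
      by_cases h0 : j = 0
      · subst h0
        rw [if_pos rfl] at hψ
        rw [if_pos ha1]
        rcases List.mem_append.mp hψ with h | h
        · exact hb1' 0 ha1 ψ h
        · rw [hr1, ← hr2]
          exact hb2' 0 hb1 ψ h
      · rw [if_neg h0] at hψ
        by_cases hc : j < D₁.n
        · rw [if_pos hc] at hψ
          rw [if_pos hc]
          exact hb1' j hc ψ hψ
        · rw [if_neg hc] at hψ
          rw [if_neg hc]
          exact hb2' (j - D₁.n + 1) (by omega) ψ hψ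

theorem disj_wf {a : MF Λ (ℕ × ℕ)} (ha : GSAnt a) : ∀ D ∈ disj a, Dwf D := by
  induction ha with
  | @reg φ p hreg =>
      have hd : disj φ = [single φ] := by
        cases hreg <;> rfl
      have hBN : BN φ := by
        cases hreg with
        | var p => exact ⟨_, RegBF.var p⟩
        | imp hP hlt hr => exact ⟨_, RegBF.imp hP hlt hr⟩
        | box l hr => exact ⟨_, RegBF.box l hr⟩
      rw [hd]
      rintro D hD
      rw [List.mem_singleton] at hD
      exact hD ▸ single_wf hBN
  | @neg φ hpos =>
      intro D hD
      rw [show disj (MF.neg φ) = [single (.neg φ)] from rfl, List.mem_singleton] at hD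
      exact hD ▸ single_wf (by exact hpos)
  | @and a b ha hb iha ihb =>
      intro D hD
      rw [show disj (MF.and a b) = (disj a).flatMap fun D₁ => (disj b).map fun D₂ => merge D₁ D₂ from rfl] at hD
      simp only [List.mem_flatMap, List.mem_map] at hD
      obtain ⟨D₁, hD₁, D₂, hD₂, rfl⟩ := hD
      exact merge_wf (iha D₁ hD₁) (ihb D₂ hD₂)
  | @or a b ha hb iha ihb =>
      intro D hD
      rw [show disj (MF.or a b) = disj a ++ disj b from rfl, List.mem_append] at hD
      rcases hD with h | h
      · exact iha D h
      · exact ihb D h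
  | @dia l a ha iha =>
      intro D hD
      rw [show disj (MF.dia l a) = (disj a).map (pre l) from rfl, List.mem_map] at hD
      obtain ⟨D', hD', rfl⟩ := hD
      exact pre_wf (iha D' hD')

theorem disj_sat (F : Frame Λ) (θ : ℕ × ℕ → Set F.W) {a : MF Λ (ℕ × ℕ)} (ha : GSAnt a) :
    ∀ w : F.W, sat F θ w a ↔ ∃ D ∈ disj a, Dsat F θ D w := by
  induction ha with
  | @reg φ p hreg =>
      intro w
      have hd : disj φ = [single φ] := by cases hreg <;> rfl
      rw [hd]
      constructor
      · intro hs
        exact ⟨single φ, List.mem_singleton.mpr rfl, (single_sat F θ φ w).mpr hs⟩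
      · rintro ⟨D, hD, hs⟩
        rw [List.mem_singleton] at hD
        exact (single_sat F θ φ w).mp (hD ▸ hs)
  | @neg φ hpos =>
      intro w
      rw [show disj (MF.neg φ) = [single (.neg φ)] from rfl]
      constructor
      · intro hs
        exact ⟨single _, List.mem_singleton.mpr rfl, (single_sat F θ _ w).mpr hs⟩
      · rintro ⟨D, hD, hs⟩
        rw [List.mem_singleton] at hD
        exact (single_sat F θ _ w).mp (hD ▸ hs)
  | @and a b ha hb iha ihb =>
      intro w
      rw [show sat F θ w (MF.and a b) ↔ sat F θ w a ∧ sat F θ w b from Iff.rfl, iha w, ihb w,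
        show disj (MF.and a b) = (disj a).flatMap fun D₁ => (disj b).map fun D₂ => merge D₁ D₂ from rfl]
      constructor
      · rintro ⟨⟨D₁, hD₁, hs₁⟩, ⟨D₂, hD₂, hs₂⟩⟩
        refine ⟨merge D₁ D₂, ?_, ?_⟩
        · simp only [List.mem_flatMap, List.mem_map]
          exact ⟨D₁, hD₁, D₂, hD₂, rfl⟩
        · exact (merge_sat F θ (disj_wf ha D₁ hD₁) (disj_wf hb D₂ hD₂) w).mpr ⟨hs₁, hs₂⟩
      · rintro ⟨D, hD, hs⟩
        simp only [List.mem_flatMap, List.mem_map] at hD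
        obtain ⟨D₁, hD₁, D₂, hD₂, rfl⟩ := hD
        obtain ⟨hs₁, hs₂⟩ :=
          (merge_sat F θ (disj_wf ha D₁ hD₁) (disj_wf hb D₂ hD₂) w).mp hs
        exact ⟨⟨D₁, hD₁, hs₁⟩, ⟨D₂, hD₂, hs₂⟩⟩
  | @or a b ha hb iha ihb =>
      intro w
      rw [show sat F θ w (MF.or a b) ↔ sat F θ w a ∨ sat F θ w b from Iff.rfl, iha w, ihb w,
        show disj (MF.or a b) = disj a ++ disj b from rfl]
      constructor
      · rintro (⟨D, hD, hs⟩ | ⟨D, hD, hs⟩)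
        · exact ⟨D, List.mem_append.mpr (Or.inl hD), hs⟩
        · exact ⟨D, List.mem_append.mpr (Or.inr hD), hs⟩
      · rintro ⟨D, hD, hs⟩
        rcases List.mem_append.mp hD with h | h
        · exact Or.inl ⟨D, h, hs⟩
        · exact Or.inr ⟨D, h, hs⟩
  | @dia l a ha iha =>
      intro w
      rw [show sat F θ w (MF.dia l a) ↔ ∃ v, F.R l w v ∧ sat F θ v a from Iff.rfl,
        show disj (MF.dia l a) = (disj a).map (pre l) from rfl]
      constructor
      · rintro ⟨v, hv, hs⟩
        obtain ⟨D, hD, hs'⟩ := (iha v).mp hs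
        exact ⟨pre l D, List.mem_map.mpr ⟨D, hD, rfl⟩,
          (pre_sat F θ l (disj_wf ha D hD) w).mpr ⟨v, hv, hs'⟩⟩
      · rintro ⟨D, hD, hs⟩
        obtain ⟨D', hD', rfl⟩ := List.mem_map.mp hD
        obtain ⟨v, hv, hs'⟩ := (pre_sat F θ l (disj_wf ha D' hD') w).mp hs
        exact ⟨v, hv, (iha v).mpr ⟨D', hD', hs'⟩⟩

end Dj

/-! ### The universal quantifier prefix of a diagram -/

section MkPref
variable {Λ : Type u}

/-- The restricted universal quantifier prefix binding the variables `v i, …, v (i+t-1)`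
along the edges `edge`. -/
def mkPref (v : ℕ → ℕ) (edge : ℕ → Option (ℕ × Λ)) : ℕ → ℕ → KrF Λ → KrF Λ
  | 0, _, β => β
  | t + 1, i, β =>
      match edge i with
      | some (p, l) => .all (v i) l (v p) (mkPref v edge t (i + 1) β)
      | none => mkPref v edge t (i + 1) β

theorem mkPref_some {v : ℕ → ℕ} {edge : ℕ → Option (ℕ × Λ)} {i p : ℕ} {l : Λ}
    (h : edge i = some (p, l)) (t : ℕ) (β : KrF Λ) :
    mkPref v edge (t + 1) i β = .all (v i) l (v p) (mkPref v edge t (i + 1) β) := by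
  rw [mkPref, h]

theorem mkPref_holds (F : Frame Λ) {v : ℕ → ℕ} {edge : ℕ → Option (ℕ × Λ)} {n : ℕ}
    (hv : ∀ j j', j < n → j' < n → v j = v j' → j = j')
    (hedge : ∀ j, 0 < j → j < n → ∃ pl, edge j = some pl ∧ pl.1 < j) :
    ∀ (t i : ℕ), 1 ≤ i → i + t = n → ∀ (β : KrF Λ) (g : ℕ → F.W),
      (KrF.holds F g (mkPref v edge t i β) ↔
        ∀ g' : ℕ → F.W, (∀ z, (∀ j, i ≤ j → j < n → z ≠ v j) → g' z = g z) →
          (∀ j, i ≤ j → j < n → ∀ p l, edge j = some (p, l) →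
            F.R l (g' (v p)) (g' (v j))) →
          KrF.holds F g' β) := by
  intro t
  induction t with
  | zero =>
      intro i hi hin β g
      rw [mkPref]
      constructor
      · intro H g' hagree hedges
        have hgg : g' = g := funext fun z => hagree z fun j hj hj' => by omega
        rwa [hgg]
      · intro H
        exact H g (fun z _ => rfl) (fun j hj hj' => by omega)
  | succ t ih =>
      intro i hi hin β g
      have hin' : i < n := by omega
      obtain ⟨⟨p, l⟩, he, hp⟩ := hedge i (by omega) hin'
      rw [mkPref_some he]
      show (∀ w, F.R l (g (v p)) w → KrF.holds F (Function.update g (v i) w) _) ↔ _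
      constructor
      · intro H g' hagree hedges
        have hgp : g' (v p) = g (v p) := by
          refine hagree _ fun j hj hj' hvpj => ?_
          have := hv p j (by omega) hj' hvpj
          omega
        have hRw : F.R l (g (v p)) (g' (v i)) := by
          rw [← hgp]
          exact hedges i le_rfl hin' p l he
        have H2 := H (g' (v i)) hRw
        rw [ih (i + 1) (by omega) (by omega) β (Function.update g (v i) (g' (v i)))] at H2
        refine H2 g' ?_ ?_
        · intro z hz
          by_cases hzi : z = v i
          · subst hzi
            rw [Function.update_self]
          · rw [Function.update_of_ne hzi]
            refine hagree z fun j hj hj' => ?_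
            rcases Nat.eq_or_lt_of_le hj with h | h
            · exact h ▸ hzi
            · exact hz j h hj'
        · exact fun j hj hj' => hedges j (by omega) hj'
      · intro H w hRw
        rw [ih (i + 1) (by omega) (by omega) β (Function.update g (v i) w)]
        intro g'' hagree hedges
        have hgi : g'' (v i) = w := by
          have : g'' (v i) = Function.update g (v i) w (v i) := by
            refine hagree _ fun j hj hj' hE => ?_
            have := hv i j hin' hj' hE
            omega
          rw [this, Function.update_self]
        refine H g'' ?_ ?_
        · intro z hz
          have h1 : g'' z = Function.update g (v i) w z := by
            refine hagree z fun j hj hj' => hz j (by omega) hj'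
          rw [h1, Function.update_of_ne (hz i le_rfl hin')]
        · intro j hj hj' p' l' he'
          rcases Nat.eq_or_lt_of_le hj with h | h
          · subst h
            rw [he] at he'
            have hpp : p' = p := (congrArg Prod.fst (Option.some.inj he')).symm
            have hll : l' = l := (congrArg Prod.snd (Option.some.inj he')).symm
            subst hpp; subst hll
            have hgp : g'' (v p') = g (v p') := by
              have h1 : g'' (v p') = Function.update g (v i) w (v p') := by
                refine hagree _ fun j' hj1 hj1' hE => ?_
                have := hv p' j' (by omega) hj1' hE
                omega
              rw [h1, Function.update_of_ne]
              intro hE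
              have := hv p' i (by omega) hin' hE
              omega
            rw [hgp, hgi]
            exact hRw
          · exact hedges j h hj' p' l' he'

theorem bv_mkPref (v : ℕ → ℕ) (edge : ℕ → Option (ℕ × Λ)) :
    ∀ t i β, KrF.bv (mkPref v edge t i β) ⊆ v '' Set.Ico i (i + t) ∪ KrF.bv β := by
  intro t
  induction t with
  | zero => intro i β; rw [mkPref]; exact Set.subset_union_right
  | succ t ih =>
      intro i β
      rw [mkPref]
      cases he : edge i with
      | none =>
          refine (ih (i + 1) β).trans (Set.union_subset_union_left _ ?_)
          exact Set.image_mono fun z hz => by simp only [Set.mem_Ico] at hz ⊢; omega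
      | some pl =>
          obtain ⟨p, l⟩ := pl
          show insert (v i) (KrF.bv (mkPref v edge t (i + 1) β)) ⊆ _
          refine Set.insert_subset ?_ ((ih (i + 1) β).trans
            (Set.union_subset_union_left _ (Set.image_mono fun z hz => by
              simp only [Set.mem_Ico] at hz ⊢; omega)))
          exact Or.inl ⟨i, by simp only [Set.mem_Ico]; omega, rfl⟩

theorem cleanBound_mkPref {v : ℕ → ℕ} {edge : ℕ → Option (ℕ × Λ)} {n : ℕ}
    (hv : ∀ j j', j < n → j' < n → v j = v j' → j = j') :
    ∀ t i β, i + t ≤ n → KrF.CleanBound β →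
      (∀ j, i ≤ j → j < i + t → v j ∉ KrF.bv β) →
      KrF.CleanBound (mkPref v edge t i β) := by
  intro t
  induction t with
  | zero => intro i β _ hβ _; rw [mkPref]; exact hβ
  | succ t ih =>
      intro i β hn hβ hbv
      rw [mkPref]
      cases he : edge i with
      | none => exact ih (i + 1) β (by omega) hβ fun j hj hj' => hbv j (by omega) (by omega)
      | some pl =>
          obtain ⟨p, l⟩ := pl
          refine ⟨ih (i + 1) β (by omega) hβ fun j hj hj' => hbv j (by omega) (by omega), ?_⟩
          intro hmem
          rcases bv_mkPref v edge t (i + 1) β hmem with h | h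
          · obtain ⟨j, hj, hvj⟩ := h
            simp only [Set.mem_Ico] at hj
            have := hv j i (by omega) (by omega) hvj
            omega
          · exact hbv i le_rfl (by omega) h

theorem fv_mkPref (v : ℕ → ℕ) {edge : ℕ → Option (ℕ × Λ)} {n : ℕ}
    (hedge : ∀ j, 0 < j → j < n → ∃ pl, edge j = some pl ∧ pl.1 < j) :
    ∀ t i β, 1 ≤ i → i + t ≤ n →
      KrF.fv (mkPref v edge t i β) ⊆
        (KrF.fv β \ (v '' Set.Ico i (i + t))) ∪ v '' Set.Iio i := by
  intro t
  induction t with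
  | zero =>
      intro i β hi hn
      rw [mkPref]
      intro z hz
      exact Or.inl ⟨hz, by rintro ⟨j, hj, rfl⟩; simp only [Set.mem_Ico] at hj; omega⟩
  | succ t ih =>
      intro i β hi hn
      obtain ⟨⟨p, l⟩, he, hp⟩ := hedge i (by omega) (by omega)
      rw [mkPref_some he]
      show insert (v p) (KrF.fv (mkPref v edge t (i + 1) β) \ {v i}) ⊆ _
      refine Set.insert_subset (Or.inr ⟨p, by simpa using hp, rfl⟩) ?_
      intro z ⟨hz1, hz2⟩
      rw [Set.mem_singleton_iff] at hz2
      rcases ih (i + 1) β (by omega) (by omega) hz1 with h | h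
      · obtain ⟨hzf, hzn⟩ := h
        refine Or.inl ⟨hzf, ?_⟩
        rintro ⟨j, hj, rfl⟩
        simp only [Set.mem_Ico] at hj
        rcases Nat.eq_or_lt_of_le hj.1 with h' | h'
        · exact hz2 (h' ▸ rfl)
        · exact hzn ⟨j, by simp only [Set.mem_Ico]; omega, rfl⟩
      · obtain ⟨j, hj, rfl⟩ := h
        simp only [Set.mem_Iio] at hj
        rcases Nat.lt_succ_iff_lt_or_eq.mp hj with h' | h'
        · exact Or.inr ⟨j, h', rfl⟩
        · exact absurd (h' ▸ rfl) hz2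

theorem gkok_mkPref {v : ℕ → ℕ} {edge : ℕ → Option (ℕ × Λ)} {n : ℕ}
    (hedge : ∀ j, 0 < j → j < n → ∃ pl, edge j = some pl ∧ pl.1 < j) :
    ∀ t i β (U : Set ℕ), 1 ≤ i → i + t ≤ n →
      KrF.GKok (U ∪ v '' Set.Ico i (i + t)) false β →
      KrF.GKok U false (mkPref v edge t i β) := by
  intro t
  induction t with
  | zero =>
      intro i β U hi hn hβ
      rw [mkPref]
      refine gkok_mono ?_ β false hβ
      intro z hz
      rcases hz with h | h
      · exact h
      · obtain ⟨j, hj, rfl⟩ := h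
        simp only [Set.mem_Ico] at hj
        omega
  | succ t ih =>
      intro i β U hi hn hβ
      obtain ⟨⟨p, l⟩, he, hp⟩ := hedge i (by omega) (by omega)
      rw [mkPref_some he]
      show KrF.GKok (insert (v i) U) false (mkPref v edge t (i + 1) β)
      refine ih (i + 1) β (insert (v i) U) (by omega) (by omega) ?_
      refine gkok_mono ?_ β false hβ
      intro z hz
      rcases hz with h | h
      · exact Or.inl (Set.mem_insert_of_mem _ h)
      · obtain ⟨j, hj, rfl⟩ := h
        simp only [Set.mem_Ico] at hj
        rcases Nat.eq_or_lt_of_le hj.1 with h' | h'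
        · exact Or.inl (h' ▸ Set.mem_insert _ _)
        · exact Or.inr ⟨j, by simp only [Set.mem_Ico]; omega, rfl⟩

theorem atomsAll_mkPref (P : LExp Λ → Prop) (v : ℕ → ℕ) (edge : ℕ → Option (ℕ × Λ)) :
    ∀ t i β, KrF.AtomsAll P β → KrF.AtomsAll P (mkPref v edge t i β) := by
  intro t
  induction t with
  | zero => intro i β hβ; rw [mkPref]; exact hβ
  | succ t ih =>
      intro i β hβ
      rw [mkPref]
      cases he : edge i with
      | none => exact ih (i + 1) β hβ
      | some pl =>
          obtain ⟨p, l⟩ := pl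
          exact ih (i + 1) β hβ

end MkPref

/-! ### The core: disjunction over the negative formulas -/

section CoreBuild
variable {Λ : Type u}

/-- Total fresh-variable count of a list of subject/formula pairs. -/
def cntL {α : Type v} : List (α × MF Λ (ℕ × ℕ)) → ℕ
  | [] => 0
  | p :: rest => cntP p.2 + cntL rest

/-- Sequential disjunction of the unravellings of the positive formulas `P` at the
subjects `y`, for `(y, P)` in the list. -/
def coreBuild (C : ℕ × ℕ → List (LExp Λ)) : List (ℕ × MF Λ (ℕ × ℕ)) → ℕ → KrF Λ
  | [], _ => falsumA
  | (y, P) :: rest, m => .or (krPos C P y m) (coreBuild C rest (m + cntP P))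

theorem coreBuild_holds {F : Frame Λ} {C : ℕ × ℕ → List (LExp Λ)} {M : ℕ}
    (hC : ∀ q, ∀ S ∈ C q, ∀ idx ∈ LExp.evars S, idx < M) :
    ∀ (L : List (ℕ × MF Λ (ℕ × ℕ))), (∀ p ∈ L, Positive p.2) →
      ∀ m, M ≤ m → ∀ g : ℕ → F.W,
      (KrF.holds F g (coreBuild C L m) ↔
        ∃ p ∈ L, g p.1 ∈ KPsem F (fun q => ⋃ S ∈ C q, LExp.den F g S) p.2) := by
  intro L
  induction L with
  | nil =>
      intro _ m hm g
      simpa [coreBuild] using holds_falsumA F g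
  | cons p rest ih =>
      intro hpos m hm g
      obtain ⟨y, P⟩ := p
      rw [coreBuild]
      show KrF.holds F g _ ∨ KrF.holds F g _ ↔ _
      rw [krPos_holds hC (hpos (y, P) (by simp)) y m hm g,
        ih (fun p hp => hpos p (List.mem_cons_of_mem _ hp)) (m + cntP P)
          (le_trans hm (Nat.le_add_right _ _)) g]
      simp

theorem bv_coreBuild (C : ℕ × ℕ → List (LExp Λ)) :
    ∀ (L : List (ℕ × MF Λ (ℕ × ℕ))) m,
      KrF.bv (coreBuild C L m) ⊆ Set.Ico m (m + cntL L) := by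
  intro L
  induction L with
  | nil => intro m; rw [coreBuild]; exact (bv_falsumA ▸ Set.empty_subset _)
  | cons p rest ih =>
      intro m
      obtain ⟨y, P⟩ := p
      rw [coreBuild]
      show KrF.bv _ ∪ KrF.bv _ ⊆ _
      refine Set.union_subset ((bv_krPos C P y m).trans ?_) ((ih (m + cntP P)).trans ?_) <;>
        · intro z hz
          simp only [Set.mem_Ico, cntL] at hz ⊢
          omega

theorem cleanBound_coreBuild (C : ℕ × ℕ → List (LExp Λ)) :
    ∀ (L : List (ℕ × MF Λ (ℕ × ℕ))) m, KrF.CleanBound (coreBuild C L m) := by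
  intro L
  induction L with
  | nil => intro m; exact trivial
  | cons p rest ih =>
      intro m
      obtain ⟨y, P⟩ := p
      refine ⟨cleanBound_krPos C P y m, ih (m + cntP P), ?_⟩
      rw [Set.eq_empty_iff_forall_notMem]
      intro z hz
      obtain ⟨hz1, hz2⟩ := hz
      have h1 := bv_krPos C P y m hz1
      have h2 := bv_coreBuild C rest (m + cntP P) hz2
      rw [Set.mem_Ico] at h1 h2
      omega

theorem fv_coreBuild (C : ℕ × ℕ → List (LExp Λ)) {W : Set ℕ} (h0 : (0 : ℕ) ∈ W)
    (hC : ∀ q, ∀ S ∈ C q, LExp.evars S ⊆ W) :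
    ∀ (L : List (ℕ × MF Λ (ℕ × ℕ))), (∀ p ∈ L, p.1 ∈ W) →
      ∀ m, (∀ idx ∈ W, idx < m) → KrF.fv (coreBuild C L m) ⊆ W := by
  intro L
  induction L with
  | nil =>
      intro _ m hm
      rw [coreBuild, fv_falsumA]
      exact Set.singleton_subset_iff.mpr h0
  | cons p rest ih =>
      intro hy m hm
      obtain ⟨y, P⟩ := p
      rw [coreBuild]
      show KrF.fv _ ∪ KrF.fv _ ⊆ W
      refine Set.union_subset ?_ (ih (fun p hp => hy p (List.mem_cons_of_mem _ hp))
        (m + cntP P) fun idx hidx => lt_of_lt_of_le (hm idx hidx) (Nat.le_add_right _ _))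
      refine (fv_krPos C h0 hC P y m hm).trans ?_
      exact Set.insert_subset (hy (y, P) (by simp)) subset_rfl

theorem gkok_coreBuild (C : ℕ × ℕ → List (LExp Λ)) {U : Set ℕ} (h0 : (0 : ℕ) ∈ U)
    (hC : ∀ q, ∀ S ∈ C q, LExp.evars S ⊆ U) (e : Bool) :
    ∀ (L : List (ℕ × MF Λ (ℕ × ℕ))) m, KrF.GKok U e (coreBuild C L m) := by
  intro L
  induction L with
  | nil => intro m; exact gkok_falsumA h0 e
  | cons p rest ih =>
      intro m
      obtain ⟨y, P⟩ := p
      rw [coreBuild]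
      cases e <;> exact ⟨gkok_krPos C P U _ h0 hC y m, ih (m + cntP P)⟩

theorem atomsAll_coreBuild (C : ℕ × ℕ → List (LExp Λ)) (hC : ∀ q, ∀ S ∈ C q, Safe S) :
    ∀ (L : List (ℕ × MF Λ (ℕ × ℕ))) m, KrF.AtomsAll Safe (coreBuild C L m) := by
  intro L
  induction L with
  | nil => intro m; exact safe_falsumExp
  | cons p rest ih =>
      intro m
      obtain ⟨y, P⟩ := p
      exact ⟨atomsAll_krPos C P hC y m, ih (m + cntP P)⟩

end CoreBuild

/-! ### The correspondent of a single diagram -/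

section CorrD
variable {Λ : Type u}

/-- Is the formula a negation? -/
def isNegF {V : Type v} : MF Λ V → Bool
  | .neg _ => true
  | _ => false

/-- Extract the body of a negation. -/
def negExtract : MF Λ (ℕ × ℕ) → Option (MF Λ (ℕ × ℕ))
  | .neg P => some P
  | _ => none

/-- The box-formulas attached to node `j`. -/
def boxesAt (D : Dj Λ) : ℕ → List (MF Λ (ℕ × ℕ)) :=
  fun j => (D.base j).filter fun ψ => !(isNegF ψ)

/-- The bodies of the negative formulas attached to node `j`. -/
def negsAt (D : Dj Λ) (j : ℕ) : List (MF Λ (ℕ × ℕ)) := (D.base j).filterMap negExtract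

/-- The list of pairs (node, negative-formula body). -/
def pairs0 (D : Dj Λ) : List (ℕ × MF Λ (ℕ × ℕ)) :=
  (List.range D.n).flatMap fun j => (negsAt D j).map fun P => (j, P)

/-- The variable assigned to node `j`: `x` for the root, `m + j` otherwise. -/
def nodeVar (x m : ℕ) : ℕ → ℕ := fun j => if j = 0 then x else m + j

/-- The generalized Kracht formula corresponding to the diagram `D` at the point
variable `x`, with fresh variables from `m + 1` on. -/
noncomputable def corrD (D : Dj Λ) (x m : ℕ) : KrF Λ :=
  mkPref (nodeVar x m) D.edge (D.n - 1) 1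
    (coreBuild (fun q => compList (nodeVar x m) D.n (boxesAt D) q.1 q.2)
      ((pairs0 D).map fun p => (nodeVar x m p.1, p.2)) (m + D.n))

/-- Fresh-variable count of the correspondent of a diagram. -/
def cntD (D : Dj Λ) : ℕ := D.n + cntL (pairs0 D)

theorem cntL_map {α β : Type v} (f : α → β) (L : List (α × MF Λ (ℕ × ℕ))) :
    cntL (L.map fun p => (f p.1, p.2)) = cntL L := by
  induction L with
  | nil => rfl
  | cons p rest ih => simp only [List.map_cons, cntL, ih]

theorem mem_negsAt {D : Dj Λ} {j : ℕ} {P : MF Λ (ℕ × ℕ)} :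
    P ∈ negsAt D j ↔ MF.neg P ∈ D.base j := by
  rw [negsAt, List.mem_filterMap]
  constructor
  · rintro ⟨ψ, hψ, hf⟩
    cases ψ <;> simp [negExtract] at hf
    exact hf ▸ hψ
  · intro h
    exact ⟨.neg P, h, rfl⟩

theorem mem_boxesAt {D : Dj Λ} {j : ℕ} {φ : MF Λ (ℕ × ℕ)} :
    φ ∈ boxesAt D j ↔ φ ∈ D.base j ∧ isNegF φ = false := by
  rw [boxesAt, List.mem_filter, Bool.not_eq_eq_eq_not, Bool.not_true]

theorem mem_pairs0 {D : Dj Λ} {j : ℕ} {P : MF Λ (ℕ × ℕ)} :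
    (j, P) ∈ pairs0 D ↔ j < D.n ∧ P ∈ negsAt D j := by
  simp only [pairs0, List.mem_flatMap, List.mem_range, List.mem_map, Prod.mk.injEq]
  constructor
  · rintro ⟨j', hj', P', hP', rfl, rfl⟩
    exact ⟨hj', hP'⟩
  · rintro ⟨hj, hP⟩
    exact ⟨j, hj, P, hP, rfl, rfl⟩

theorem boxesAt_reg {D : Dj Λ} (hwf : Dwf D) {j : ℕ} (hj : j < D.n)
    {φ : MF Λ (ℕ × ℕ)} (hφ : φ ∈ boxesAt D j) : ∃ p, RegBF Prod.fst φ p := by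
  obtain ⟨hb, hne⟩ := mem_boxesAt.mp hφ
  have hBN := hwf.2.2 j hj φ hb
  cases φ with
  | neg a => simp [isNegF] at hne
  | var q => exact hBN
  | top => exact hBN
  | bot => exact hBN
  | and a b => exact hBN
  | or a b => exact hBN
  | imp a b => exact hBN
  | dia l a => exact hBN
  | box l a => exact hBN

theorem negsAt_pos {D : Dj Λ} (hwf : Dwf D) {j : ℕ} (hj : j < D.n)
    {P : MF Λ (ℕ × ℕ)} (hP : P ∈ negsAt D j) : Positive P :=
  hwf.2.2 j hj (.neg P) (mem_negsAt.mp hP)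

theorem nodeVar_inj {x m : ℕ} (hx : x < m) (n : ℕ) :
    ∀ j j', j < n → j' < n → nodeVar x m j = nodeVar x m j' → j = j' := by
  intro j j' _ _ hE
  by_cases h0 : j = 0 <;> by_cases h0' : j' = 0 <;>
    simp only [nodeVar, h0, h0', if_pos, if_neg, if_true, if_false] at hE <;> omega

theorem nodeVar_lt {x m : ℕ} (hx : x < m) {n j : ℕ} (hj : j < n) :
    nodeVar x m j < m + n := by
  by_cases h0 : j = 0 <;> simp only [nodeVar, h0, if_pos, if_neg, if_true, if_false] <;> omega

/-- Master lemma: the correspondent of a diagram expresses the failure of the diagram at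
`g x` under every valuation. -/
theorem corrD_holds (F : Frame Λ) {D : Dj Λ} (hwf : Dwf D) {x m : ℕ} (hx : x < m)
    (g : ℕ → F.W) : KrF.holds F g (corrD D x m) ↔ ∀ θ, ¬ Dsat F θ D (g x) := by
  have hn1 : 0 < D.n := hwf.1
  have hvinj := nodeVar_inj hx D.n
  have hedge := hwf.2.1
  have hC : ∀ q, ∀ S ∈ (fun q : ℕ × ℕ =>
      compList (nodeVar x m) D.n (boxesAt D) q.1 q.2) q,
      ∀ idx ∈ LExp.evars S, idx < m + D.n := by
    intro q S hS idx hidx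
    obtain ⟨j, hj, rfl⟩ := evars_compList (nodeVar x m) D.n (boxesAt D) q.1 q.2 S hS hidx
    exact nodeVar_lt hx hj
  have hLpos : ∀ p ∈ (pairs0 D).map fun p => (nodeVar x m p.1, p.2), Positive p.2 := by
    rintro p hp
    obtain ⟨⟨j, P⟩, hjP, rfl⟩ := List.mem_map.mp hp
    obtain ⟨hj, hP⟩ := mem_pairs0.mp hjP
    exact negsAt_pos hwf hj hP
  have hcore : ∀ g' : ℕ → F.W,
      KrF.holds F g' (coreBuild (fun q => compList (nodeVar x m) D.n (boxesAt D) q.1 q.2)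
          ((pairs0 D).map fun p => (nodeVar x m p.1, p.2)) (m + D.n)) ↔
        ∃ j < D.n, ∃ P ∈ negsAt D j,
          sat F (myMinV F D.n (fun j => g' (nodeVar x m j)) (boxesAt D))
            (g' (nodeVar x m j)) P := by
    intro g'
    rw [coreBuild_holds hC _ hLpos (m + D.n) le_rfl g']
    have hden : (fun q => ⋃ S ∈ compList (nodeVar x m) D.n (boxesAt D) q.1 q.2,
        LExp.den F g' S) = myMinV F D.n (fun j => g' (nodeVar x m j)) (boxesAt D) := by
      funext q
      exact den_compList F g' (nodeVar x m) D.n (boxesAt D)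
        (fun j => g' (nodeVar x m j)) (fun j _ => rfl) q.1 q.2
    rw [hden]
    constructor
    · rintro ⟨p, hp, hmem⟩
      obtain ⟨⟨j, P⟩, hjP, rfl⟩ := List.mem_map.mp hp
      obtain ⟨hj, hP⟩ := mem_pairs0.mp hjP
      exact ⟨j, hj, P, hP, (posSat (negsAt_pos hwf hj hP) _).mpr hmem⟩
    · rintro ⟨j, hj, P, hP, hsat⟩
      refine ⟨(nodeVar x m j, P), List.mem_map.mpr ⟨(j, P), mem_pairs0.mpr ⟨hj, hP⟩, rfl⟩, ?_⟩
      exact (posSat (negsAt_pos hwf hj hP) _).mp hsat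
  rw [corrD, mkPref_holds F hvinj hedge (D.n - 1) 1 le_rfl (by omega) _ g]
  constructor
  · intro H θ hDsat
    obtain ⟨h, hr, hmor, hbase⟩ := hDsat
    classical
    set g'' : ℕ → F.W := fun z => if m + 1 ≤ z ∧ z < m + D.n then h (z - m) else g z
      with hg''def
    have hg'v : ∀ j, j < D.n → g'' (nodeVar x m j) = h j := by
      intro j hj
      by_cases hj0 : j = 0
      · subst hj0
        have hveq : nodeVar x m 0 = x := by simp [nodeVar]
        rw [hveq, hg''def]
        beta_reduce
        rw [if_neg (by omega), hr]
      · have hveq : nodeVar x m j = m + j := by simp [nodeVar, hj0]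
        rw [hveq, hg''def]
        beta_reduce
        rw [if_pos (by omega), Nat.add_sub_cancel_left]
    have Hg' := H g'' ?_ ?_
    · rw [hcore] at Hg'
      obtain ⟨j, hj, P, hP, hsat⟩ := Hg'
      have hθbx : ∀ j' < D.n, ∀ φ ∈ boxesAt D j',
          sat F θ ((fun j => g'' (nodeVar x m j)) j') φ := by
        intro j' hj' φ hφ
        have hbb := hbase j' hj' φ (mem_boxesAt.mp hφ).1
        show sat F θ (g'' (nodeVar x m j')) φ
        rw [hg'v j' hj']
        exact hbb
      have hmm := myMin_min hθbx fun j' hj' φ hφ => boxesAt_reg hwf hj' hφ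
      have hsatθ := pos_mono (negsAt_pos hwf hj hP) hmm hsat
      have hneg : ¬ sat F θ (h j) P := hbase j hj (.neg P) (mem_negsAt.mp hP)
      rw [hg'v j hj] at hsatθ
      exact hneg hsatθ
    · intro z hz
      rw [hg''def]
      beta_reduce
      rw [if_neg]
      intro ⟨hz1, hz2⟩
      refine hz (z - m) (by omega) (by omega) ?_
      simp only [nodeVar, if_neg (by omega : ¬ z - m = 0)]
      omega
    · intro j hj1 hjn p l he
      obtain ⟨pl, hpl, hplt⟩ := hedge j hj1 hjn
      have hpj : p < j := by
        rw [hpl] at he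
        have hpe := Option.some.inj he
        rw [hpe] at hplt
        exact hplt
      rw [hg'v j hjn, hg'v p (by omega)]
      exact hmor j hj1 hjn p l he
  · intro H g' hagree hedges
    rw [hcore g']
    have hx0 : g' (nodeVar x m 0) = g x := by
      have hv0 : nodeVar x m 0 = x := by simp [nodeVar]
      rw [hv0]
      refine hagree x fun j hj hjn hE => ?_
      simp only [nodeVar, if_neg (by omega : ¬ j = 0)] at hE
      omega
    have hDs := H (myMinV F D.n (fun j => g' (nodeVar x m j)) (boxesAt D))
    have hnall : ¬ (∀ j < D.n, ∀ ψ ∈ D.base j,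
        sat F (myMinV F D.n (fun j => g' (nodeVar x m j)) (boxesAt D))
          (g' (nodeVar x m j)) ψ) := by
      intro hall
      refine hDs ⟨fun j => g' (nodeVar x m j), hx0, ?_, hall⟩
      intro i hi hin p l he
      exact hedges i hi hin p l he
    push_neg at hnall
    obtain ⟨j, hj, ψ, hψ, hnsat⟩ := hnall
    cases hne : isNegF (Λ := Λ) ψ with
    | false =>
        obtain ⟨p, hregp⟩ := boxesAt_reg hwf hj (mem_boxesAt.mpr ⟨hψ, hne⟩)
        exact absurd (myMin_sat hj (mem_boxesAt.mpr ⟨hψ, hne⟩) hregp) hnsat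
    | true =>
        cases ψ with
        | neg P =>
            refine ⟨j, hj, P, mem_negsAt.mpr hψ, ?_⟩
            by_contra hcon
            exact hnsat hcon
        | var q => simp [isNegF] at hne
        | top => simp [isNegF] at hne
        | bot => simp [isNegF] at hne
        | and a b => simp [isNegF] at hne
        | or a b => simp [isNegF] at hne
        | imp a b => simp [isNegF] at hne
        | dia l a => simp [isNegF] at hne
        | box l a => simp [isNegF] at hne

end CorrD

/-! ### Bookkeeping for `corrD`, and conjunction over diagrams -/

section CorrDBook
variable {Λ : Type u}

theorem nodeVar_image_Iio (x m n : ℕ) :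
    nodeVar x m '' Set.Iio n ⊆ insert x (nodeVar x m '' Set.Ico 1 n) := by
  rintro z ⟨j, hj, rfl⟩
  by_cases h0 : j = 0
  · subst h0
    exact Or.inl (by simp [nodeVar])
  · exact Or.inr ⟨j, by simp only [Set.mem_Ico, Set.mem_Iio] at hj ⊢; omega, rfl⟩

theorem bv_corrD (D : Dj Λ) (x m : ℕ) :
    KrF.bv (corrD D x m) ⊆ Set.Ico m (m + cntD D) := by
  rw [corrD]
  refine (bv_mkPref _ _ _ _ _).trans (Set.union_subset ?_ ?_)
  · rintro z ⟨j, hj, rfl⟩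
    simp only [Set.mem_Ico] at hj ⊢
    simp only [nodeVar, if_neg (by omega : ¬ j = 0)]
    rw [cntD]
    omega
  · refine (bv_coreBuild _ _ _).trans ?_
    rw [cntL_map]
    intro z hz
    simp only [Set.mem_Ico] at hz ⊢
    rw [cntD]
    omega

theorem cleanBound_corrD {D : Dj Λ} (hn1 : 0 < D.n) {x m : ℕ} (hx : x < m) :
    KrF.CleanBound (corrD D x m) := by
  rw [corrD]
  refine cleanBound_mkPref (nodeVar_inj hx D.n) _ _ _ (by omega)
    (cleanBound_coreBuild _ _ _) ?_
  intro j hj hj' hmem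
  have := bv_coreBuild (fun q => compList (nodeVar x m) D.n (boxesAt D) q.1 q.2)
    ((pairs0 D).map fun p => (nodeVar x m p.1, p.2)) (m + D.n) hmem
  rw [Set.mem_Ico] at this
  simp only [nodeVar, if_neg (by omega : ¬ j = 0)] at this
  omega

theorem fv_corrD {D : Dj Λ} (hwf : Dwf D) {x m : ℕ} (hx : x < m) :
    KrF.fv (corrD D x m) ⊆ {0, x} := by
  have hn1 : 0 < D.n := hwf.1
  rw [corrD]
  refine (fv_mkPref _ hwf.2.1 _ 1 _ le_rfl (by omega)).trans ?_
  refine Set.union_subset ?_ ?_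
  · intro z ⟨hz1, hz2⟩
    have hfvc : z ∈ insert 0 (insert x (nodeVar x m '' Set.Ico 1 D.n)) := by
      refine fv_coreBuild _ (by simp) ?_ _ ?_ _ ?_ hz1
      · intro q S hS
        refine (evars_compList _ _ _ _ _ S hS).trans ?_
        refine (nodeVar_image_Iio x m D.n).trans ?_
        intro z' hz'
        rcases hz' with h | h
        · exact Or.inr (Or.inl h)
        · exact Or.inr (Or.inr h)
      · rintro p hp
        obtain ⟨⟨j, P⟩, hjP, rfl⟩ := List.mem_map.mp hp
        obtain ⟨hj, _⟩ := mem_pairs0.mp hjP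
        by_cases h0 : j = 0
        · subst h0
          exact Or.inr (Or.inl (by simp [nodeVar]))
        · exact Or.inr (Or.inr ⟨j, by simp only [Set.mem_Ico]; omega, rfl⟩)
      · intro idx hidx
        rcases hidx with h | h
        · omega
        · rcases h with h | h
          · omega
          · obtain ⟨j, hj, rfl⟩ := h
            simp only [Set.mem_Ico] at hj
            simp only [nodeVar, if_neg (by omega : ¬ j = 0)]
            omega
    rcases hfvc with h | h
    · exact Or.inl h
    · rcases h with h | h
      · exact Or.inr h
      · obtain ⟨j, hj, rfl⟩ := h
        simp only [Set.mem_Ico] at hj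
        exact absurd ⟨j, by simp only [Set.mem_Ico]; omega, rfl⟩ hz2
  · rintro z ⟨j, hj, rfl⟩
    simp only [Set.mem_Iio] at hj
    have hj0 : j = 0 := by omega
    subst hj0
    exact Or.inr (by simp [nodeVar])

theorem gkok_corrD {D : Dj Λ} (hwf : Dwf D) {x m : ℕ} (hx : x < m) {U : Set ℕ}
    (h0 : (0 : ℕ) ∈ U) (hxU : x ∈ U) : KrF.GKok U false (corrD D x m) := by
  have hn1 : 0 < D.n := hwf.1
  rw [corrD]
  refine gkok_mkPref hwf.2.1 _ 1 _ U le_rfl (by omega) ?_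
  refine gkok_coreBuild _ (Or.inl h0) ?_ false _ _
  intro q S hS
  refine (evars_compList _ _ _ _ _ S hS).trans ?_
  refine (nodeVar_image_Iio x m D.n).trans ?_
  intro z hz
  rcases hz with h | h
  · exact Or.inl (h ▸ hxU)
  · obtain ⟨j, hj, rfl⟩ := h
    refine Or.inr ⟨j, ?_, rfl⟩
    simp only [Set.mem_Ico] at hj ⊢
    omega

theorem atomsAll_corrD (D : Dj Λ) (x m : ℕ) : KrF.AtomsAll Safe (corrD D x m) := by
  rw [corrD]
  refine atomsAll_mkPref Safe _ _ _ _ _ ?_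
  exact atomsAll_coreBuild _ (fun q S hS => safe_compList _ _ _ _ _ S hS) _ _

/-- Conjunction of the correspondents of a list of diagrams. -/
noncomputable def andD : List (Dj Λ) → ℕ → ℕ → KrF Λ
  | [], _, _ => truthA
  | D :: rest, x, m => .and (corrD D x m) (andD rest x (m + cntD D))

/-- Total fresh-variable count of a list of diagrams. -/
def sumCntD : List (Dj Λ) → ℕ
  | [] => 0
  | D :: rest => cntD D + sumCntD rest

theorem andD_holds (F : Frame Λ) {L : List (Dj Λ)} (hwf : ∀ D ∈ L, Dwf D) {x : ℕ} :
    ∀ m, x < m → ∀ g : ℕ → F.W,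
      (KrF.holds F g (andD L x m) ↔ ∀ D ∈ L, ∀ θ, ¬ Dsat F θ D (g x)) := by
  induction L with
  | nil => intro m hx g; simpa [andD] using holds_truthA F g
  | cons D rest ih =>
      intro m hx g
      rw [andD]
      show KrF.holds F g _ ∧ KrF.holds F g _ ↔ _
      rw [corrD_holds F (hwf D (by simp)) hx g,
        ih (fun D' hD' => hwf D' (List.mem_cons_of_mem _ hD')) (m + cntD D)
          (by omega) g]
      simp

theorem bv_andD (L : List (Dj Λ)) (x : ℕ) :
    ∀ m, KrF.bv (andD L x m) ⊆ Set.Ico m (m + sumCntD L) := by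
  induction L with
  | nil => intro m; rw [andD, bv_truthA]; exact Set.empty_subset _
  | cons D rest ih =>
      intro m
      rw [andD]
      show KrF.bv _ ∪ KrF.bv _ ⊆ _
      refine Set.union_subset ((bv_corrD D x m).trans ?_) ((ih (m + cntD D)).trans ?_) <;>
        · intro z hz
          simp only [Set.mem_Ico, sumCntD] at hz ⊢
          omega

theorem cleanBound_andD {L : List (Dj Λ)} (hwf : ∀ D ∈ L, Dwf D) {x : ℕ} :
    ∀ m, x < m → KrF.CleanBound (andD L x m) := by
  induction L with
  | nil => intro m hx; exact trivial
  | cons D rest ih =>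
      intro m hx
      refine ⟨cleanBound_corrD (hwf D (by simp)).1 hx,
        ih (fun D' hD' => hwf D' (List.mem_cons_of_mem _ hD')) (m + cntD D) (by omega), ?_⟩
      rw [Set.eq_empty_iff_forall_notMem]
      intro z hz
      obtain ⟨hz1, hz2⟩ := hz
      have h1 := bv_corrD D x m hz1
      have h2 := bv_andD rest x (m + cntD D) hz2
      rw [Set.mem_Ico] at h1 h2
      omega

theorem fv_andD {L : List (Dj Λ)} (hwf : ∀ D ∈ L, Dwf D) {x : ℕ} :
    ∀ m, x < m → KrF.fv (andD L x m) ⊆ {0, x} := by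
  induction L with
  | nil => intro m hx; rw [andD, fv_truthA]; intro z hz; exact Or.inl hz
  | cons D rest ih =>
      intro m hx
      exact Set.union_subset (fv_corrD (hwf D (by simp)) hx)
        (ih (fun D' hD' => hwf D' (List.mem_cons_of_mem _ hD')) (m + cntD D) (by omega))

theorem gkok_andD {L : List (Dj Λ)} (hwf : ∀ D ∈ L, Dwf D) {x : ℕ} {U : Set ℕ}
    (h0 : (0 : ℕ) ∈ U) (hxU : x ∈ U) :
    ∀ m, x < m → KrF.GKok U false (andD L x m) := by
  induction L with
  | nil => intro m hx; exact gkok_truthA h0 false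
  | cons D rest ih =>
      intro m hx
      exact ⟨gkok_corrD (hwf D (by simp)) hx h0 hxU,
        ih (fun D' hD' => hwf D' (List.mem_cons_of_mem _ hD')) (m + cntD D) (by omega)⟩

theorem atomsAll_andD (L : List (Dj Λ)) (x : ℕ) :
    ∀ m, KrF.AtomsAll Safe (andD L x m) := by
  induction L with
  | nil =>
      intro m
      exact ⟨SafeFor.var 0, fun l a h => by cases h⟩
  | cons D rest ih => exact fun m => ⟨atomsAll_corrD D x m, ih (m + cntD D)⟩

end CorrDBook

/-! ### The top-level translation of generalized Sahlqvist formulas -/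

section TopLevel
variable {Λ : Type u}

/-- Fresh-variable count for the top-level translation. -/
def cntT : MF Λ (ℕ × ℕ) → ℕ
  | .imp a _ => sumCntD (disj a)
  | .box _ a => cntT a + 1
  | .and a b => cntT a + cntT b
  | .or a b => cntT a + cntT b
  | _ => 0

/-- The top-level translation: the correspondent of a generalized Sahlqvist formula at
the point variable `x` with fresh variables from `m` on. -/
noncomputable def TT : MF Λ (ℕ × ℕ) → ℕ → ℕ → KrF Λ
  | .imp a _, x, m => andD (disj a) x m
  | .box l a, x, m => .all m l x (TT a m (m + 1))
  | .and a b, x, m => .and (TT a x m) (TT b x (m + cntT a))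
  | .or a b, x, m => .or (TT a x m) (TT b x (m + cntT a))
  | _, _, _ => falsumA

theorem T_holds (F : Frame Λ) {φ : MF Λ (ℕ × ℕ)} (hφ : GSF φ) :
    ∀ x m, x < m → ∀ g : ℕ → F.W,
      (KrF.holds F g (TT φ x m) ↔ ∀ θ : ℕ × ℕ → Set F.W, sat F θ (g x) φ) := by
  induction hφ with
  | @impl a ha =>
      intro x m hx g
      rw [show TT (MF.imp a .bot) x m = andD (disj a) x m from rfl,
        andD_holds F (disj_wf ha) m hx g]
      constructor
      · intro H θ hsat
        obtain ⟨D, hD, hDsat⟩ := (disj_sat F θ ha (g x)).mp hsat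
        exact H D hD θ hDsat
      · intro H D hD θ hDsat
        exact H θ ((disj_sat F θ ha (g x)).mpr ⟨D, hD, hDsat⟩)
  | @box l a ha ih =>
      intro x m hx g
      rw [show TT (MF.box l a) x m = .all m l x (TT a m (m + 1)) from rfl]
      show (∀ w, F.R l (g x) w → KrF.holds F (Function.update g m w) (TT a m (m + 1))) ↔ _
      constructor
      · intro H θ w hw
        have := (ih m (m + 1) (by omega) (Function.update g m w)).mp (H w hw) θ
        rwa [Function.update_self] at this
      · intro H w hw
        rw [ih m (m + 1) (by omega) (Function.update g m w)]
        intro θ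
        rw [Function.update_self]
        exact H θ w hw
  | @and a b ha hb iha ihb =>
      intro x m hx g
      rw [show TT (MF.and a b) x m = .and (TT a x m) (TT b x (m + cntT a)) from rfl]
      show KrF.holds F g _ ∧ KrF.holds F g _ ↔ _
      rw [iha x m hx g, ihb x (m + cntT a) (by omega) g]
      constructor
      · rintro ⟨h1, h2⟩ θ
        exact ⟨h1 θ, h2 θ⟩
      · intro H
        exact ⟨fun θ => (H θ).1, fun θ => (H θ).2⟩
  | @or a b ha hb hdisj iha ihb =>
      intro x m hx g
      rw [show TT (MF.or a b) x m = .or (TT a x m) (TT b x (m + cntT a)) from rfl]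
      show KrF.holds F g _ ∨ KrF.holds F g _ ↔ _
      rw [iha x m hx g, ihb x (m + cntT a) (by omega) g]
      constructor
      · rintro (H | H) θ
        · exact Or.inl (H θ)
        · exact Or.inr (H θ)
      · intro H
        by_contra hcon
        push_neg at hcon
        obtain ⟨⟨θ₁, h1⟩, ⟨θ₂, h2⟩⟩ := hcon
        classical
        have := H (fun q => if q ∈ MF.vars a then θ₁ q else θ₂ q)
        rcases this with h | h
        · refine h1 ?_
          rwa [sat_congr_vars a (fun q hq => by rw [if_pos hq]) (g x)] at h
        · refine h2 ?_
          rwa [sat_congr_vars b (fun q hq => by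
            rw [if_neg]
            intro hqa
            have : q ∈ MF.vars a ∩ MF.vars b := ⟨hqa, hq⟩
            rw [hdisj] at this
            exact this) (g x)] at h

theorem bv_T {φ : MF Λ (ℕ × ℕ)} (hφ : GSF φ) :
    ∀ x m, KrF.bv (TT φ x m) ⊆ Set.Ico m (m + cntT φ) := by
  induction hφ with
  | @impl a ha =>
      intro x m
      exact (bv_andD (disj a) x m).trans (by rw [show cntT (MF.imp a .bot) = sumCntD (disj a) from rfl])
  | @box l a ha ih =>
      intro x m
      show insert m (KrF.bv (TT a m (m + 1))) ⊆ _
      refine Set.insert_subset ?_ ((ih m (m + 1)).trans ?_)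
      · simp only [Set.mem_Ico, show cntT (MF.box l a) = cntT a + 1 from rfl]
        omega
      · intro z hz
        simp only [Set.mem_Ico, show cntT (MF.box l a) = cntT a + 1 from rfl] at hz ⊢
        omega
  | @and a b ha hb iha ihb =>
      intro x m
      show KrF.bv _ ∪ KrF.bv _ ⊆ _
      refine Set.union_subset ((iha x m).trans ?_) ((ihb x (m + cntT a)).trans ?_) <;>
        · intro z hz
          simp only [Set.mem_Ico, show cntT (MF.and a b) = cntT a + cntT b from rfl] at hz ⊢
          omega
  | @or a b ha hb hdisj iha ihb =>
      intro x m
      show KrF.bv _ ∪ KrF.bv _ ⊆ _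
      refine Set.union_subset ((iha x m).trans ?_) ((ihb x (m + cntT a)).trans ?_) <;>
        · intro z hz
          simp only [Set.mem_Ico, show cntT (MF.or a b) = cntT a + cntT b from rfl] at hz ⊢
          omega

theorem cleanBound_T {φ : MF Λ (ℕ × ℕ)} (hφ : GSF φ) :
    ∀ x m, x < m → KrF.CleanBound (TT φ x m) := by
  induction hφ with
  | @impl a ha => intro x m hx; exact cleanBound_andD (disj_wf ha) m hx
  | @box l a ha ih =>
      intro x m hx
      refine ⟨ih m (m + 1) (by omega), fun hmem => ?_⟩
      have := bv_T ha m (m + 1) hmem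
      rw [Set.mem_Ico] at this
      omega
  | @and a b ha hb iha ihb =>
      intro x m hx
      refine ⟨iha x m hx, ihb x (m + cntT a) (by omega), ?_⟩
      rw [Set.eq_empty_iff_forall_notMem]
      intro z ⟨hz1, hz2⟩
      have h1 := bv_T ha x m hz1
      have h2 := bv_T hb x (m + cntT a) hz2
      rw [Set.mem_Ico] at h1 h2
      omega
  | @or a b ha hb hdisj iha ihb =>
      intro x m hx
      refine ⟨iha x m hx, ihb x (m + cntT a) (by omega), ?_⟩
      rw [Set.eq_empty_iff_forall_notMem]
      intro z ⟨hz1, hz2⟩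
      have h1 := bv_T ha x m hz1
      have h2 := bv_T hb x (m + cntT a) hz2
      rw [Set.mem_Ico] at h1 h2
      omega

theorem fv_T {φ : MF Λ (ℕ × ℕ)} (hφ : GSF φ) :
    ∀ x m, x < m → KrF.fv (TT φ x m) ⊆ {0, x} := by
  induction hφ with
  | @impl a ha => intro x m hx; exact fv_andD (disj_wf ha) m hx
  | @box l a ha ih =>
      intro x m hx
      show insert x (KrF.fv (TT a m (m + 1)) \ {m}) ⊆ {0, x}
      refine Set.insert_subset (Or.inr rfl) ?_
      intro z ⟨hz1, hz2⟩
      rw [Set.mem_singleton_iff] at hz2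
      rcases ih m (m + 1) (by omega) hz1 with h | h
      · exact Or.inl h
      · exact absurd h hz2
  | @and a b ha hb iha ihb =>
      intro x m hx
      exact Set.union_subset (iha x m hx) (ihb x (m + cntT a) (by omega))
  | @or a b ha hb hdisj iha ihb =>
      intro x m hx
      exact Set.union_subset (iha x m hx) (ihb x (m + cntT a) (by omega))

theorem gkok_T {φ : MF Λ (ℕ × ℕ)} (hφ : GSF φ) :
    ∀ x m (U : Set ℕ), x < m → (0 : ℕ) ∈ U → x ∈ U → KrF.GKok U false (TT φ x m) := by
  induction hφ with
  | @impl a ha => intro x m U hx h0 hxU; exact gkok_andD (disj_wf ha) h0 hxU m hx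
  | @box l a ha ih =>
      intro x m U hx h0 hxU
      show KrF.GKok (insert m U) false (TT a m (m + 1))
      exact ih m (m + 1) (insert m U) (by omega) (Set.mem_insert_of_mem _ h0)
        (Set.mem_insert _ _)
  | @and a b ha hb iha ihb =>
      intro x m U hx h0 hxU
      exact ⟨iha x m U hx h0 hxU, ihb x (m + cntT a) U (by omega) h0 hxU⟩
  | @or a b ha hb hdisj iha ihb =>
      intro x m U hx h0 hxU
      exact ⟨iha x m U hx h0 hxU, ihb x (m + cntT a) U (by omega) h0 hxU⟩

theorem atomsAll_T {φ : MF Λ (ℕ × ℕ)} (hφ : GSF φ) :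
    ∀ x m, KrF.AtomsAll Safe (TT φ x m) := by
  induction hφ with
  | @impl a ha => intro x m; exact atomsAll_andD (disj a) x m
  | @box l a ha ih => intro x m; exact ih m (m + 1)
  | @and a b ha hb iha ihb => intro x m; exact ⟨iha x m, ihb x (m + cntT a)⟩
  | @or a b ha hb hdisj iha ihb => intro x m; exact ⟨iha x m, ihb x (m + cntT a)⟩

end TopLevel
/-- every generalized Sahlqvist formula has a local first-order correspondent
which is a generalized Kracht formula (read via the `#`-translation of its atoms). -/
theorem statement14 {Λ : Type u} (φ : MF Λ (ℕ × ℕ)) (hφ : GSF φ) :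
    ∃ (α : KrF Λ) (x₀ : ℕ), IsGenKracht α x₀ ∧
      ∀ (F : Frame Λ) (w : F.W),
        (∀ θ : ℕ × ℕ → Set F.W, sat F θ w φ) ↔
          ∀ g : ℕ → F.W, g x₀ = w → KrF.holds F g α := by
  refine ⟨.and (TT φ 0 1) truthA, 0, ⟨⟨?_, ?_, ?_⟩, ?_⟩, ?_⟩
  case _ =>
    -- Clean
    constructor
    · rw [Set.eq_empty_iff_forall_notMem]
      intro z ⟨hz1, hz2⟩
      have hfv : z ∈ ({0, 0} : Set ℕ) := by
        rcases hz1 with h | h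
        · exact fv_T hφ 0 1 Nat.one_pos h
        · rw [fv_truthA] at h
          exact Or.inl h
      have hz0 : z = 0 := by rcases hfv with h | h <;> exact h
      subst hz0
      rcases hz2 with h | h
      · have := bv_T hφ 0 1 h
        rw [Set.mem_Ico] at this
        omega
      · rw [bv_truthA] at h
        exact h
    · exact ⟨cleanBound_T hφ 0 1 Nat.one_pos, trivial, by rw [bv_truthA, Set.inter_empty]⟩
  case _ =>
    -- AtomsAll Safe
    exact ⟨atomsAll_T hφ 0 1, SafeFor.var 0, fun l a h => by cases h⟩
  case _ =>
    -- GKok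
    have hfv : KrF.fv (KrF.and (TT φ 0 1) truthA) = {0} := by
      apply Set.Subset.antisymm
      · intro z hz
        rcases hz with h | h
        · have := fv_T hφ 0 1 Nat.one_pos h
          rcases this with h' | h' <;> exact h'
        · rw [fv_truthA] at h
          exact h
      · intro z hz
        rw [Set.mem_singleton_iff] at hz
        subst hz
        exact Or.inr (by rw [fv_truthA]; rfl)
    rw [hfv]
    exact ⟨gkok_T hφ 0 1 {0} Nat.one_pos rfl rfl, gkok_truthA (U := {0}) rfl false⟩
  case _ =>
    -- fv = {0}
    apply Set.Subset.antisymm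
    · intro z hz
      rcases hz with h | h
      · have := fv_T hφ 0 1 Nat.one_pos h
        rcases this with h' | h' <;> exact h'
      · rw [fv_truthA] at h
        exact h
    · intro z hz
      rw [Set.mem_singleton_iff] at hz
      subst hz
      exact Or.inr (by rw [fv_truthA]; rfl)
  case _ =>
    -- semantics
    intro F w
    constructor
    · intro H g hg0
      refine ⟨?_, holds_truthA F g⟩
      rw [T_holds F hφ 0 1 Nat.one_pos g, hg0]
      exact H
    · intro H θ
      obtain ⟨h1, _⟩ := H (fun _ => w) rfl
      exact (T_holds F hφ 0 1 Nat.one_pos (fun _ => w)).mp h1 θ
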